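/- arXiv:1305.3447 — 2 statements merged into one kernel-verified Lean document; each statement's English description precedes it below -/
import Mathlib

section
/- Let (C,R) be a directed graph with ℓ = t = 1 that is not strongly connected and has |C'| = 1. For i ∈ C'' let U(i) = {k ∈ C : every directed path from k to C' traverses i}, and for j ∈ C'' let C''_{j-inarb} be as defined below. Then: (a) U(j) ∈ C''_{j-inarb} for every j ∈ C''; and (b) for every j ∈ C'' and every U ∈ C''_{j-inarb} there exists a unique set I_U ⊆ C'' such that the sets {U(i) : i ∈ I_U} are pairwise disjoint and U = ⋃_{i ∈ I_U} U(i). -/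
open Finset

/-- Reachability (existence of a directed walk) in the directed graph with arc set `R`. -/
def Reach {c : ℕ} (R : Finset (Fin c × Fin c)) (a b : Fin c) : Prop :=
  Relation.ReflTransGen (fun x y => (x, y) ∈ R) a b

/-- `p` is a directed path in the graph with arc set `R`. -/
def IsDipath {c : ℕ} (R : Finset (Fin c × Fin c)) (p : List (Fin c)) : Prop :=
  p ≠ [] ∧ p.Nodup ∧ p.Chain' (fun a b => (a, b) ∈ R)

/-- `p` is a directed path from `a` to `b` in the graph with arc set `R`. -/
def IsDipathFromTo {c : ℕ} (R : Finset (Fin c × Fin c)) (p : List (Fin c))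
    (a b : Fin c) : Prop :=
  IsDipath R p ∧ p.head? = some a ∧ p.getLast? = some b

/-- There is a directed path from `a` to `b` all of whose intermediate steps stay in `S`
(for `a ∈ S` this says that there is a directed path from `a` to `b` with vertex set
contained in `S`). -/
def ReachIn {c : ℕ} (R : Finset (Fin c × Fin c)) (S : Finset (Fin c))
    (a b : Fin c) : Prop :=
  Relation.ReflTransGen (fun x y => (x, y) ∈ R ∧ x ∈ S ∧ y ∈ S) a b

/-- The set of arcs of `R` entering the vertex set `U`. -/
def arcsIn {c : ℕ} (R : Finset (Fin c × Fin c)) (U : Finset (Fin c)) :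
    Finset (Fin c × Fin c) :=
  R.filter (fun a => a.1 ∉ U ∧ a.2 ∈ U)

/-- The set of arcs of `R` leaving the vertex set `U`. -/
def arcsOut {c : ℕ} (R : Finset (Fin c × Fin c)) (U : Finset (Fin c)) :
    Finset (Fin c × Fin c) :=
  R.filter (fun a => a.1 ∈ U ∧ a.2 ∉ U)

/-- For a graph whose unique absorbing strong component is `{r}` (so `C'' = C \ {r}`),
`Uset R r i = U(i) = {k ∈ C : every directed path from k to r traverses i}`. -/
noncomputable def Uset {c : ℕ} (R : Finset (Fin c × Fin c)) (r i : Fin c) :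
    Finset (Fin c) :=
  @Finset.filter _ (fun k => ∀ p : List (Fin c), IsDipathFromTo R p k r → i ∈ p)
    (Classical.decPred _) Finset.univ

/-- `U ∈ C''_{j-inarb}`: `U ⊆ C'' = C \ {r}`, every vertex of `U` has a directed path to
`j` with vertex set contained in `U`, and every vertex of `C'' \ U` has a directed path
to `C' = {r}` with vertex set contained in `C \ U`. -/
def Jinarb {c : ℕ} (R : Finset (Fin c × Fin c)) (r j : Fin c)
    (U : Finset (Fin c)) : Prop :=
  U ⊆ Finset.univ.erase r ∧
    (∀ i' ∈ U, ReachIn R U i' j) ∧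
    (∀ i' ∈ Finset.univ.erase r \ U, ReachIn R (Finset.univ \ U) i' r)

/-- The vertex set of the strong component of the graph containing `j`. -/
noncomputable def SCC {c : ℕ} (R : Finset (Fin c × Fin c)) (j : Fin c) :
    Finset (Fin c) :=
  @Finset.filter _ (fun k => Reach R j k ∧ Reach R k j) (Classical.decPred _) Finset.univ

/-- `I` is a subset of `C'' = C \ {r}` such that the sets `U(i)`, `i ∈ I`, are pairwise
disjoint with union `U`. -/
def IsPartitionInto {c : ℕ} (R : Finset (Fin c × Fin c)) (r : Fin c)
    (U I : Finset (Fin c)) : Prop :=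
  I ⊆ Finset.univ.erase r ∧
    (↑I : Set (Fin c)).PairwiseDisjoint (fun i => Uset R r i) ∧
    U = I.biUnion (Uset R r)

/-- `W(j) = ⋃_{U ∈ C''_{j-inarb}} I_U`, where `I_U` is the unique subset of `C''` with
`U = ⋃*_{i ∈ I_U} U(i)` (pairwise disjoint union). -/
def Wset {c : ℕ} (R : Finset (Fin c × Fin c)) (r j : Fin c) : Set (Fin c) :=
  {i | ∃ U I : Finset (Fin c), Jinarb R r j U ∧ IsPartitionInto R r U I ∧ i ∈ I}

/-- `U(C''(j)) = {k ∈ C'' : every directed path from k to r traverses C''(j)}`. -/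
noncomputable def UsetSC {c : ℕ} (R : Finset (Fin c × Fin c)) (r j : Fin c) :
    Finset (Fin c) :=
  @Finset.filter _
    (fun k => ∀ p : List (Fin c), IsDipathFromTo R p k r → ∃ x ∈ p, x ∈ SCC R j)
    (Classical.decPred _) (Finset.univ.erase r)

section lists
variable {α : Type*}

lemma trim_chain (step : α → α → Prop) :
    ∀ (n : ℕ) (p : List α), p.length ≤ n → p ≠ [] → p.Chain' step →
    ∃ q : List α, q ≠ [] ∧ q.Nodup ∧ q.Chain' step ∧ q.head? = p.head? ∧
      q.getLast? = p.getLast? ∧ ∀ x ∈ q, x ∈ p := by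
  intro n
  induction n with
  | zero =>
    intro p hlen hne _
    cases p with
    | nil => exact absurd rfl hne
    | cons a l => simp at hlen
  | succ n ih =>
    intro p hlen hne hch
    by_cases hnd : p.Nodup
    · exact ⟨p, hne, hnd, hch, rfl, rfl, fun x hx => hx⟩
    · obtain ⟨x, hdup⟩ := List.exists_duplicate_iff_not_nodup.2 hnd
      rw [List.duplicate_iff_sublist, List.cons_sublist_iff] at hdup
      obtain ⟨r₁, r₂, hp12, hx1, hx2⟩ := hdup
      rw [List.cons_sublist_iff] at hx2
      obtain ⟨r₃, r₄, hr2, hx3, -⟩ := hx2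
      obtain ⟨s1, s2, hr1⟩ := List.append_of_mem hx1
      obtain ⟨t1, t2, hr3⟩ := List.append_of_mem hx3
      have hpform : p = (s1 ++ [x]) ++ ((s2 ++ t1) ++ x :: (t2 ++ r₄)) := by
        rw [hp12, hr1, hr2, hr3]; simp
      set mid := s2 ++ t1 with hmid
      set tail := t2 ++ r₄ with htail
      set q : List α := (s1 ++ [x]) ++ tail with hq
      have hpre : (s1 ++ [x]) <+: p := ⟨_, hpform.symm⟩
      have hsuf : (x :: tail) <:+ p := by
        refine ⟨s1 ++ x :: mid, ?_⟩
        rw [hpform]; simp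
      have hch1 : (s1 ++ [x]).Chain' step := hch.prefix hpre
      have hch2 : (x :: tail).Chain' step := hch.suffix hsuf
      have hqch : q.Chain' step := by
        refine List.IsChain.append hch1 (List.isChain_cons.1 hch2).2 ?_
        intro a ha b hb
        rw [List.getLast?_concat] at ha
        cases ha
        exact (List.isChain_cons.1 hch2).1 b hb
      have hqne : q ≠ [] := by simp [hq]
      have hqhead : q.head? = p.head? := by
        rw [hq, hpform]
        simp [List.head?_append, Option.or_assoc]
      have hqlast : q.getLast? = p.getLast? := by
        have h1 : q = s1 ++ (x :: tail) := by simp [hq]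
        have h2 : p = (s1 ++ x :: mid) ++ (x :: tail) := by rw [hpform]; simp
        obtain ⟨v, hv⟩ := Option.isSome_iff_exists.1
          (List.getLast?_isSome.2 (List.cons_ne_nil x tail))
        rw [h1, h2, List.getLast?_append, List.getLast?_append, hv]
        simp
      have hqmem : ∀ y ∈ q, y ∈ p := by
        intro y hy
        rw [hq] at hy
        rw [hpform]
        simp only [List.mem_append, List.mem_cons, List.mem_singleton,
          List.not_mem_nil] at hy ⊢
        tauto
      have hqlen : q.length ≤ n := by
        have : q.length + (mid.length + 1) = p.length := by
          rw [hq, hpform]; simp; omega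
        omega
      obtain ⟨q', h1, h2, h3, h4, h5, h6⟩ := ih q hqlen hqne hqch
      exact ⟨q', h1, h2, h3, h4.trans hqhead, h5.trans hqlast,
        fun y hy => hqmem y (h6 y hy)⟩

lemma chain'_and_mem {Q : α → Prop} {step : α → α → Prop} :
    ∀ p : List α, p.Chain' step → (∀ x ∈ p, Q x) →
      p.Chain' (fun x y => step x y ∧ Q x ∧ Q y) := by
  intro p
  induction p with
  | nil => intro _ _; exact List.isChain_nil
  | cons a l ih =>
    intro hch hQ
    simp only [List.Chain', List.isChain_cons] at hch ⊢
    refine ⟨?_, ih hch.2 (fun x hx => hQ x (List.mem_cons_of_mem _ hx))⟩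
    intro y hy
    exact ⟨hch.1 y hy, hQ a List.mem_cons_self,
      hQ y (List.mem_cons_of_mem _ (List.mem_of_mem_head? hy))⟩

lemma mem_chain_targets {s : α → α → Prop} {Q : α → Prop}
    (hs : ∀ x y, s x y → Q y) :
    ∀ (l : List α) (a : α), List.Chain s a l → ∀ x ∈ l, Q x := by
  intro l
  induction l with
  | nil => simp
  | cons b t ih =>
    intro a hch x hx
    cases hch with
    | cons_cons hab ht =>
      rcases List.mem_cons.1 hx with rfl | hx
      · exact hs _ _ hab
      · exact ih b ht x hx

lemma rtg_of_chain' {step : α → α → Prop} {p : List α} {a b : α}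
    (hne : p ≠ []) (hch : p.Chain' step) (hh : p.head? = some a)
    (hl : p.getLast? = some b) :
    Relation.ReflTransGen step a b := by
  cases p with
  | nil => exact absurd rfl hne
  | cons a' l =>
    have ha : a' = a := by simpa using hh
    subst ha
    have hgl : (a' :: l).getLast (List.cons_ne_nil _ _) = b := by
      have := List.getLast?_eq_getLast (l := a' :: l) (List.cons_ne_nil _ _)
      rw [this] at hl
      exact Option.some_injective _ hl
    exact List.relationReflTransGen_of_exists_isChain_cons l hch hgl

end lists

section graph
variable {c : ℕ} {R : Finset (Fin c × Fin c)} {r : Fin c}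

lemma dipath_of_rtgQ {Q : Fin c → Prop} {a b : Fin c} (hQa : Q a)
    (h : Relation.ReflTransGen (fun x y => (x, y) ∈ R ∧ Q x ∧ Q y) a b) :
    ∃ p, IsDipathFromTo R p a b ∧ ∀ x ∈ p, Q x := by
  obtain ⟨l, hch, hlast⟩ := List.exists_isChain_cons_of_relationReflTransGen h
  have hch' : (a :: l).Chain' (fun x y => (x, y) ∈ R ∧ Q x ∧ Q y) := hch
  have hQall : ∀ x ∈ (a :: l), Q x := by
    intro x hx
    rcases List.mem_cons.1 hx with rfl | hx
    · exact hQa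
    · exact mem_chain_targets (fun x y h => h.2.2) l a hch x hx
  obtain ⟨q, hne, hnd, hqch, hh, hl, hmem⟩ :=
    trim_chain _ (a :: l).length (a :: l) le_rfl (List.cons_ne_nil _ _) hch'
  have hglast : (a :: l).getLast? = some b := by
    rw [List.getLast?_eq_getLast (List.cons_ne_nil _ _), hlast]
  refine ⟨q, ⟨⟨hne, hnd, List.IsChain.imp (fun a b h => h.1) hqch⟩, ?_, ?_⟩,
    fun x hx => hQall x (hmem x hx)⟩
  · rw [hh]; rfl
  · rw [hl, hglast]

lemma rtgQ_of_dipath {Q : Fin c → Prop} {p : List (Fin c)} {a b : Fin c}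
    (h : IsDipathFromTo R p a b) (hQ : ∀ x ∈ p, Q x) :
    Relation.ReflTransGen (fun x y => (x, y) ∈ R ∧ Q x ∧ Q y) a b :=
  rtg_of_chain' h.1.1 (chain'_and_mem p h.1.2.2 hQ) h.2.1 h.2.2

lemma exists_dipath_to (hreach : ∀ k : Fin c, Reach R k r) (k : Fin c) :
    ∃ p, IsDipathFromTo R p k r := by
  have h : Relation.ReflTransGen
      (fun x y => (x, y) ∈ R ∧ (fun _ : Fin c => True) x ∧ (fun _ : Fin c => True) y) k r :=
    by
      have hk : Relation.ReflTransGen (fun x y => (x, y) ∈ R) k r := hreach k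
      clear hreach
      induction hk with
      | refl => exact Relation.ReflTransGen.refl
      | tail _ hxy ih => exact ih.tail ⟨hxy, trivial, trivial⟩
  obtain ⟨p, hp, -⟩ := dipath_of_rtgQ trivial h
  exact ⟨p, hp⟩

lemma mem_Uset {i k : Fin c} :
    k ∈ Uset R r i ↔ ∀ p, IsDipathFromTo R p k r → i ∈ p := by
  unfold Uset
  exact ⟨fun h => ((@Finset.mem_filter _ _ (Classical.decPred _) _ _).1 h).2,
    fun h => (@Finset.mem_filter _ _ (Classical.decPred _) _ _).2
      ⟨Finset.mem_univ _, h⟩⟩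

lemma not_mem_Uset {i k : Fin c} :
    k ∉ Uset R r i ↔ ∃ p, IsDipathFromTo R p k r ∧ i ∉ p := by
  rw [mem_Uset]; push_neg; rfl

lemma self_mem_Uset {k : Fin c} : k ∈ Uset R r k :=
  mem_Uset.2 (fun p hp => List.mem_of_mem_head? (by rw [hp.2.1]; rfl))

lemma r_not_mem_Uset {i : Fin c} (hir : i ≠ r) : r ∉ Uset R r i := by
  intro h
  have := mem_Uset.1 h [r] ⟨⟨by simp, by simp, List.isChain_singleton _⟩, rfl, rfl⟩
  simp at this
  exact hir this

lemma dipath_prefix {p s t : List (Fin c)} {a b x : Fin c}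
    (h : IsDipathFromTo R p a b) (hsp : p = s ++ x :: t) :
    IsDipathFromTo R (s ++ [x]) a x ∧ ∀ y ∈ s ++ [x], y ∈ p := by
  have hpre : (s ++ [x]) <+: p := ⟨t, by rw [hsp]; simp⟩
  refine ⟨⟨⟨by simp, h.1.2.1.sublist hpre.sublist, h.1.2.2.prefix hpre⟩, ?_,
    List.getLast?_concat⟩, fun y hy => hpre.sublist.mem hy⟩
  have := h.2.1
  rw [hsp, List.head?_append] at this
  rw [List.head?_append]
  simpa using this

lemma dipath_suffix {p s t : List (Fin c)} {a b x : Fin c}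
    (h : IsDipathFromTo R p a b) (hsp : p = s ++ x :: t) :
    IsDipathFromTo R (x :: t) x b ∧ ∀ y ∈ x :: t, y ∈ p := by
  have hsuf : (x :: t) <:+ p := ⟨s, hsp.symm⟩
  refine ⟨⟨⟨List.cons_ne_nil _ _, h.1.2.1.sublist hsuf.sublist,
    h.1.2.2.suffix hsuf⟩, rfl, ?_⟩, fun y hy => hsuf.sublist.mem hy⟩
  have := h.2.2
  rw [hsp, List.getLast?_append] at this
  obtain ⟨v, hv⟩ := Option.isSome_iff_exists.1
    (List.getLast?_isSome.2 (List.cons_ne_nil x t))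
  rw [hv] at this ⊢
  simpa using this

lemma dipath_avoid_trans {a x b j : Fin c} {p q : List (Fin c)}
    (hp : IsDipathFromTo R p a x) (hpj : j ∉ p)
    (hq : IsDipathFromTo R q x b) (hqj : j ∉ q) :
    ∃ w, IsDipathFromTo R w a b ∧ j ∉ w := by
  have h1 := rtgQ_of_dipath (Q := fun y => y ≠ j) hp
    (fun y hy hyj => hpj (hyj ▸ hy))
  have h2 := rtgQ_of_dipath (Q := fun y => y ≠ j) hq
    (fun y hy hyj => hqj (hyj ▸ hy))
  have haj : a ≠ j := by
    intro hh
    exact hpj (hh ▸ List.mem_of_mem_head? (by rw [hp.2.1]; rfl))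
  obtain ⟨w, hw, hwQ⟩ := dipath_of_rtgQ (Q := fun y => y ≠ j) haj (h1.trans h2)
  exact ⟨w, hw, fun hjw => hwQ j hjw rfl⟩

lemma Uset_trans {i i' : Fin c} (h : i ∈ Uset R r i') :
    Uset R r i ⊆ Uset R r i' := by
  intro k hk
  rw [mem_Uset] at hk ⊢
  intro p hp
  obtain ⟨s, t, hst⟩ := List.append_of_mem (hk p hp)
  obtain ⟨hq, hqmem⟩ := dipath_suffix hp hst
  exact hqmem _ (mem_Uset.1 h _ hq)

lemma Uset_antisymm (hreach : ∀ k : Fin c, Reach R k r) {i i' : Fin c}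
    (h1 : i ∈ Uset R r i') (h2 : i' ∈ Uset R r i) : i = i' := by
  by_contra hne
  obtain ⟨p, hp⟩ := exists_dipath_to hreach i
  obtain ⟨s, t, hst⟩ := List.append_of_mem (mem_Uset.1 h1 p hp)
  obtain ⟨hq, -⟩ := dipath_suffix hp hst
  have hiq : i ∈ i' :: t := mem_Uset.1 h2 _ hq
  cases s with
  | nil =>
    have : p.head? = some i' := by rw [hst]; rfl
    rw [hp.2.1] at this
    exact hne (Option.some_injective _ this)
  | cons a s' =>
    have hha : a = i := by
      have : p.head? = some a := by rw [hst]; rfl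
      rw [hp.2.1] at this
      exact (Option.some_injective _ this).symm
    have hnd := hp.1.2.1
    rw [hst, List.nodup_append] at hnd
    exact hnd.2.2 i (by simp [hha]) i hiq rfl

lemma comp_aux (hreach : ∀ k : Fin c, Reach R k r) {k i1 i2 : Fin c}
    (hk2 : k ∈ Uset R r i2) {p : List (Fin c)} {s t : List (Fin c)}
    (hp : IsDipathFromTo R p k r) (hst : p = s ++ i1 :: t)
    (hmem : i2 ∈ i1 :: t) : i1 ∈ Uset R r i2 := by
  rcases eq_or_ne i1 i2 with rfl | hne
  · exact self_mem_Uset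
  by_contra h
  obtain ⟨w, hw, hwj⟩ := not_mem_Uset.1 h
  obtain ⟨hq, -⟩ := dipath_prefix hp hst
  have hi2t : i2 ∈ t := by
    rcases List.mem_cons.1 hmem with h' | h'
    · exact absurd h'.symm hne
    · exact h'
  have hi2s : i2 ∉ s ++ [i1] := by
    intro hmem'
    have hnd := hp.1.2.1
    rw [hst, List.nodup_append] at hnd
    rcases List.mem_append.1 hmem' with h' | h'
    · exact hnd.2.2 _ h' _ (List.mem_cons_of_mem _ hi2t) rfl
    · simp at h'
      exact hne h'.symm
  obtain ⟨w', hw', hw'j⟩ := dipath_avoid_trans hq hi2s hw hwj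
  exact hw'j (mem_Uset.1 hk2 w' hw')

lemma Uset_comparable (hreach : ∀ k : Fin c, Reach R k r) {k i1 i2 : Fin c}
    (h1 : k ∈ Uset R r i1) (h2 : k ∈ Uset R r i2) :
    i1 ∈ Uset R r i2 ∨ i2 ∈ Uset R r i1 := by
  obtain ⟨p, hp⟩ := exists_dipath_to hreach k
  obtain ⟨s, t, hst⟩ := List.append_of_mem (mem_Uset.1 h1 p hp)
  have m2 : i2 ∈ p := mem_Uset.1 h2 p hp
  by_cases hc : i2 ∈ i1 :: t
  · exact Or.inl (comp_aux hreach h2 hp hst hc)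
  · have hi2s : i2 ∈ s := by
      rw [hst, List.mem_append] at m2
      tauto
    obtain ⟨s', t', hs'⟩ := List.append_of_mem hi2s
    have hst2 : p = s' ++ i2 :: (t' ++ i1 :: t) := by rw [hst, hs']; simp
    exact Or.inr (comp_aux hreach h1 hp hst2 (by simp))

lemma jinarb_Uset (hreach : ∀ k : Fin c, Reach R k r) {j : Fin c} (hjr : j ≠ r) :
    Jinarb R r j (Uset R r j) := by
  refine ⟨?_, ?_, ?_⟩
  · intro k hk
    rw [Finset.mem_erase]
    refine ⟨fun hkr => r_not_mem_Uset hjr (hkr ▸ hk), Finset.mem_univ _⟩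
  · intro i' hi'
    obtain ⟨p, hp⟩ := exists_dipath_to hreach i'
    obtain ⟨s, t, hst⟩ := List.append_of_mem (mem_Uset.1 hi' p hp)
    obtain ⟨hq, hqmem⟩ := dipath_prefix hp hst
    have hjs : j ∉ s := by
      have hnd := hp.1.2.1
      rw [hst, List.nodup_append] at hnd
      exact fun hjs => hnd.2.2 _ hjs _ List.mem_cons_self rfl
    have hall : ∀ x ∈ s ++ [j], x ∈ Uset R r j := by
      intro x hx
      rcases List.mem_append.1 hx with hxs | hxj
      · by_contra hxU
        obtain ⟨w, hw, hwj⟩ := not_mem_Uset.1 hxU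
        obtain ⟨s', t', hs'⟩ := List.append_of_mem hxs
        have hsplit : p = s' ++ x :: (t' ++ j :: t) := by rw [hst, hs']; simp
        obtain ⟨hq', -⟩ := dipath_prefix hp hsplit
        have hjq' : j ∉ s' ++ [x] := by
          intro hmem'
          rcases List.mem_append.1 hmem' with h' | h'
          · exact hjs (by rw [hs']; exact List.mem_append_left _ h')
          · simp at h'
            exact hjs (h' ▸ hxs)
        obtain ⟨w', hw', hw'j⟩ := dipath_avoid_trans hq' hjq' hw hwj
        exact hw'j (mem_Uset.1 hi' w' hw')
      · simp at hxj
        exact hxj ▸ self_mem_Uset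
    exact rtgQ_of_dipath hq hall
  · intro i' hi'
    have hi'U : i' ∉ Uset R r j := (Finset.mem_sdiff.1 hi').2
    obtain ⟨p, hp, hjp⟩ := not_mem_Uset.1 hi'U
    have hall : ∀ x ∈ p, x ∈ Finset.univ \ Uset R r j := by
      intro x hx
      rw [Finset.mem_sdiff]
      refine ⟨Finset.mem_univ _, ?_⟩
      obtain ⟨s, t, hst⟩ := List.append_of_mem hx
      obtain ⟨hq, hqmem⟩ := dipath_suffix hp hst
      exact not_mem_Uset.2 ⟨x :: t, hq, fun hj => hjp (hqmem j hj)⟩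
    exact rtgQ_of_dipath hp hall

lemma Uset_subset_of_jinarb (hreach : ∀ k : Fin c, Reach R k r)
    {j k : Fin c} {U : Finset (Fin c)} (hU : Jinarb R r j U) (hk : k ∈ U) :
    Uset R r k ⊆ U := by
  intro m hm
  by_contra hmU
  have hkr : k ≠ r := (Finset.mem_erase.1 (hU.1 hk)).1
  have hmr : m ≠ r := fun h => r_not_mem_Uset hkr (h ▸ hm)
  have h3 := hU.2.2 m (by
    rw [Finset.mem_sdiff, Finset.mem_erase]
    exact ⟨⟨hmr, Finset.mem_univ _⟩, hmU⟩)
  obtain ⟨p, hp, hall⟩ := dipath_of_rtgQ (Q := fun x => x ∈ Finset.univ \ U)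
    (Finset.mem_sdiff.2 ⟨Finset.mem_univ _, hmU⟩) h3
  have hkp := hall k (mem_Uset.1 hm p hp)
  rw [Finset.mem_sdiff] at hkp
  exact hkp.2 hk

lemma exists_partition (hreach : ∀ k : Fin c, Reach R k r)
    {j : Fin c} {U : Finset (Fin c)} (hU : Jinarb R r j U) :
    IsPartitionInto R r U
      (U.filter (fun i => ∀ i' ∈ U, i ∈ Uset R r i' → i = i')) := by
  classical
  set I := U.filter (fun i => ∀ i' ∈ U, i ∈ Uset R r i' → i = i') with hI
  have hImax : ∀ i ∈ I, ∀ i' ∈ U, i ∈ Uset R r i' → i = i' := by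
    intro i hi
    exact (Finset.mem_filter.1 hi).2
  have hIU : I ⊆ U := Finset.filter_subset _ _
  have cover : ∀ k ∈ U, ∃ i ∈ I, k ∈ Uset R r i := by
    intro k hk
    set D := U.filter (fun i => k ∈ Uset R r i) with hD
    have hkD : k ∈ D := Finset.mem_filter.2 ⟨hk, self_mem_Uset⟩
    obtain ⟨i, hiD, hmax⟩ :=
      Finset.exists_max_image D (fun i => (Uset R r i).card) ⟨k, hkD⟩
    obtain ⟨hiU, hki⟩ := Finset.mem_filter.1 hiD
    refine ⟨i, Finset.mem_filter.2 ⟨hiU, ?_⟩, hki⟩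
    intro i' hi'U hii'
    have hsub : Uset R r i ⊆ Uset R r i' := Uset_trans hii'
    have hi'D : i' ∈ D := Finset.mem_filter.2 ⟨hi'U, hsub hki⟩
    have heq : Uset R r i = Uset R r i' :=
      Finset.eq_of_subset_of_card_le hsub (hmax i' hi'D)
    exact Uset_antisymm hreach hii' (by rw [heq]; exact self_mem_Uset)
  refine ⟨hIU.trans hU.1, ?_, ?_⟩
  · intro i1 h1 i2 h2 hne
    rw [Function.onFun]
    rw [Finset.disjoint_left]
    intro m hm1 hm2
    rcases Uset_comparable hreach hm1 hm2 with h | h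
    · exact hne (hImax i1 (Finset.mem_coe.1 h1) i2 (hIU (Finset.mem_coe.1 h2)) h)
    · exact hne (hImax i2 (Finset.mem_coe.1 h2) i1 (hIU (Finset.mem_coe.1 h1)) h).symm
  · apply Finset.Subset.antisymm
    · intro k hk
      obtain ⟨i, hi, hki⟩ := cover k hk
      exact Finset.mem_biUnion.2 ⟨i, hi, hki⟩
    · intro k hk
      obtain ⟨i, hi, hki⟩ := Finset.mem_biUnion.1 hk
      exact Uset_subset_of_jinarb hreach hU (hIU hi) hki

lemma partition_subset (hreach : ∀ k : Fin c, Reach R k r)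
    {U I1 I2 : Finset (Fin c)}
    (h1 : IsPartitionInto R r U I1) (h2 : IsPartitionInto R r U I2) :
    I1 ⊆ I2 := by
  intro i hi
  have hiU : i ∈ U := by
    rw [h1.2.2]
    exact Finset.mem_biUnion.2 ⟨i, hi, self_mem_Uset⟩
  rw [h2.2.2] at hiU
  obtain ⟨i', hi', hii'⟩ := Finset.mem_biUnion.1 hiU
  have hi'U : i' ∈ U := by
    rw [h2.2.2]
    exact Finset.mem_biUnion.2 ⟨i', hi', self_mem_Uset⟩
  rw [h1.2.2] at hi'U
  obtain ⟨i'', hi'', hi'i''⟩ := Finset.mem_biUnion.1 hi'U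
  have hii'' : i ∈ Uset R r i'' := Uset_trans hi'i'' hii'
  have hieq : i = i'' := by
    by_contra hne
    have hd := h1.2.1 (Finset.mem_coe.2 hi) (Finset.mem_coe.2 hi'') hne
    exact (Finset.disjoint_left.1 hd self_mem_Uset) hii''
  have : i = i' := Uset_antisymm hreach hii' (hieq ▸ hi'i'')
  exact this ▸ hi'


end graph

theorem stmt12 {c : ℕ}
    (R : Finset (Fin c × Fin c)) (hloop : ∀ v : Fin c, (v, v) ∉ R)
    -- `{r} = C'` is the vertex set of the unique absorbing strong component (`ℓ = t = 1`):
    (r : Fin c)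
    (habs : ∀ p ∈ R, p.1 ≠ r)
    (hreach : ∀ k : Fin c, Reach R k r)
    (hweak : ∀ a b : Fin c,
      Relation.ReflTransGen (fun x y => (x, y) ∈ R ∨ (y, x) ∈ R) a b)
    (hnsc : ¬ ∀ a b : Fin c, Reach R a b)
    :
    (∀ j : Fin c, j ≠ r → Jinarb R r j (Uset R r j)) ∧
    (∀ j : Fin c, j ≠ r → ∀ U : Finset (Fin c), Jinarb R r j U →
      ∃! I : Finset (Fin c), IsPartitionInto R r U I) := by
  constructor
  · intro j hjr
    exact jinarb_Uset hreach hjr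
  · intro j hjr U hU
    refine ⟨_, exists_partition hreach hU, fun I' hI' => ?_⟩
    exact Finset.Subset.antisymm
      (partition_subset hreach hI' (exists_partition hreach hU))
      (partition_subset hreach (exists_partition hreach hU) hI')
end

section
/- Let (C,R) be a directed graph with ℓ = t = 1 that is not strongly connected and has |C'| = 1, and fix j ∈ C''. Then W(j) = {i ∈ C'' : there exist a directed path P_j from i to j and a directed path P_{C'} from i to C' such that the vertex sets of P_j and P_{C'} intersect exactly in {i}}. -/
open Finset

@[simp] lemma myChain'_iff {α : Type*} {R : α → α → Prop} {l : List α} :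
    l.Chain' R ↔ l.IsChain R := Iff.rfl

section Infra
variable {α : Type*}

/-- From a chain, reachability from head to last. -/
lemma myChainReach {r : α → α → Prop} :
    ∀ (p : List α) (a b : α), p.Chain' r → p.head? = some a → p.getLast? = some b →
      Relation.ReflTransGen r a b := by
  intro p
  induction p with
  | nil => intro a b _ h; simp at h
  | cons x t ih =>
    intro a b hc hh hl
    simp at hh; subst hh
    cases t with
    | nil => simp at hl; subst hl; exact Relation.ReflTransGen.refl
    | cons y t' =>
      have hstep : r x y := (List.isChain_cons_cons.mp hc).1
      have htail : (y :: t').Chain' r := (List.isChain_cons_cons.mp hc).2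
      have hl' : (y :: t').getLast? = some b := by
        rw [← hl]; symm; exact (List.getLast?_cons_cons ..)
      exact Relation.ReflTransGen.head hstep (ih y b htail rfl hl')
  
/-- Path extraction from reflexive-transitive closure. -/
lemma myRelPath {r : α → α → Prop} [DecidableEq α] {a b : α}
    (h : Relation.ReflTransGen r a b) :
    ∃ p : List α, p.Chain' r ∧ p.Nodup ∧ p.head? = some a ∧ p.getLast? = some b ∧
      ∀ x ∈ p, x = a ∨ ∃ y, r y x := by
  induction h with
  | refl => exact ⟨[a], by simp, by simp, by simp, by simp, by simp⟩
  | @tail b' c hab hbc ih =>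
    obtain ⟨p, hc, hn, hh, hl, hv⟩ := ih
    by_cases hcp : c ∈ p
    · obtain ⟨p₁, p₂, rfl⟩ := List.append_of_mem hcp
      refine ⟨p₁ ++ [c], ?_, ?_, ?_, ?_, ?_⟩
      · have : p₁ ++ c :: p₂ = (p₁ ++ [c]) ++ p₂ := by simp
        rw [this] at hc
        exact (List.isChain_append.mp hc).1
      · have : p₁ ++ c :: p₂ = (p₁ ++ [c]) ++ p₂ := by simp
        rw [this] at hn
        exact (List.nodup_append.mp hn).1
      · cases p₁ with
        | nil => simpa using hh
        | cons z t => simpa using hh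
      · rw [List.getLast?_append]; rfl
      · intro x hx
        apply hv
        have : x ∈ p₁ ++ c :: p₂ ↔ x ∈ p₁ ∨ x ∈ c :: p₂ := by simp
        rcases List.mem_append.mp hx with h1 | h1
        · simp [h1]
        · simp at h1; subst h1; simp
    · have hpne : p ≠ [] := by
        intro h0; rw [h0] at hh; simp at hh
      refine ⟨p ++ [c], ?_, ?_, ?_, ?_, ?_⟩
      · rw [myChain'_iff, List.isChain_append]
        refine ⟨hc, by simp, ?_⟩
        intro x hx y hy
        simp at hy; subst hy
        rw [hl] at hx; simp at hx; subst hx; exact hbc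
      · rw [List.nodup_append']
        exact ⟨hn, by simp, by intro x hx hx'; simp at hx'; subst hx'; exact hcp hx⟩
      · rw [List.head?_append_of_ne_nil _ hpne]; exact hh
      · rw [List.getLast?_append]; rfl
      · intro x hx
        rcases List.mem_append.mp hx with h1 | h1
        · exact hv x h1
        · simp at h1; subst h1; exact Or.inr ⟨b', hbc⟩

/-- Restricting a chain to a relation with vertex conditions. -/
lemma myChainRestrict {r r' : α → α → Prop} :
    ∀ (p : List α), p.Chain' r → (∀ x y, r x y → x ∈ p → y ∈ p → r' x y) → p.Chain' r' := by
  intro p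
  induction p with
  | nil => intro _ _; simp
  | cons x t ih =>
    intro hc hr
    cases t with
    | nil => simp
    | cons y t' =>
      rw [myChain'_iff, List.isChain_cons_cons] at hc ⊢
      refine ⟨hr x y hc.1 (by simp) (by simp), ih hc.2 ?_⟩
      intro u v huv hu hv
      exact hr u v huv (by simp [hu]) (by right; exact hv)

/-- First element of a list satisfying a predicate, with split. -/
lemma myFirstSplit (P : α → Prop) :
    ∀ (p : List α), (∃ x ∈ p, P x) →
      ∃ p₁ x p₂, p = p₁ ++ x :: p₂ ∧ P x ∧ ∀ y ∈ p₁, ¬ P y := by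
  intro p
  induction p with
  | nil => rintro ⟨x, hx, _⟩; simp at hx
  | cons a t ih =>
    intro h
    by_cases hPa : P a
    · exact ⟨[], a, t, by simp, hPa, by simp⟩
    · have : ∃ x ∈ t, P x := by
        obtain ⟨x, hx, hPx⟩ := h
        simp at hx
        rcases hx with rfl | hx
        · exact absurd hPx hPa
        · exact ⟨x, hx, hPx⟩
      obtain ⟨p₁, x, p₂, heq, hPx, hnone⟩ := ih this
      refine ⟨a :: p₁, x, p₂, by simp [heq], hPx, ?_⟩
      intro y hy
      simp at hy
      rcases hy with rfl | hy
      · exact hPa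
      · exact hnone y hy

lemma myHeadMemOf {l : List α} {a : α} (h : l.head? = some a) : a ∈ l :=
  List.mem_of_mem_head? (by rw [h]; exact Option.mem_def.mpr rfl)

end Infra
section Graph
variable {c : ℕ}

/-- A step avoiding a forbidden set. -/
def myStepA (R : Finset (Fin c × Fin c)) (S : Finset (Fin c)) (x y : Fin c) : Prop :=
  (x, y) ∈ R ∧ x ∉ S ∧ y ∉ S

/-- Reachability avoiding a set. -/
def myRA (R : Finset (Fin c × Fin c)) (S : Finset (Fin c)) (a b : Fin c) : Prop :=
  Relation.ReflTransGen (myStepA R S) a b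

variable {R : Finset (Fin c × Fin c)} {S : Finset (Fin c)} {a b v : Fin c}

lemma myPathNe {p : List (Fin c)} (h : IsDipathFromTo R p a b) : p ≠ [] := h.1.1

lemma myHeadMem {p : List (Fin c)} (h : IsDipathFromTo R p a b) : a ∈ p :=
  List.mem_of_mem_head? (by rw [h.2.1]; simp)

lemma myLastMem {p : List (Fin c)} (h : IsDipathFromTo R p a b) : b ∈ p :=
  List.mem_of_getLast? h.2.2

/-- Extract a path from reachability. -/
lemma myReachPath (h : Reach R a b) :
    ∃ p, IsDipathFromTo R p a b ∧ ∀ x ∈ p, x = a ∨ ∃ y, (y, x) ∈ R := by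
  obtain ⟨p, hc, hn, hh, hl, hv⟩ := myRelPath h
  have hne : p ≠ [] := by intro h0; rw [h0] at hh; simp at hh
  exact ⟨p, ⟨⟨hne, hn, hc⟩, hh, hl⟩, hv⟩

/-- Extract a path avoiding `S` from avoiding reachability. -/
lemma myRAPath (h : myRA R S a b) (ha : a ∉ S) :
    ∃ p, IsDipathFromTo R p a b ∧ ∀ x ∈ p, x ∉ S := by
  obtain ⟨p, hc, hn, hh, hl, hv⟩ := myRelPath h
  have hne : p ≠ [] := by intro h0; rw [h0] at hh; simp at hh
  refine ⟨p, ⟨⟨hne, hn, ?_⟩, hh, hl⟩, ?_⟩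
  · exact List.IsChain.imp (fun a b hst => hst.1) hc
  · intro x hx
    rcases hv x hx with rfl | ⟨y, hy⟩
    · exact ha
    · exact hy.2.2

/-- Extract a path inside `S` from `ReachIn`. -/
lemma myReachInPath (h : ReachIn R S a b) (ha : a ∈ S) :
    ∃ p, IsDipathFromTo R p a b ∧ ∀ x ∈ p, x ∈ S := by
  obtain ⟨p, hc, hn, hh, hl, hv⟩ := myRelPath h
  have hne : p ≠ [] := by intro h0; rw [h0] at hh; simp at hh
  refine ⟨p, ⟨⟨hne, hn, ?_⟩, hh, hl⟩, ?_⟩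
  · exact List.IsChain.imp (fun a b hst => hst.1) hc
  · intro x hx
    rcases hv x hx with rfl | ⟨y, hy⟩
    · exact ha
    · exact hy.2.2

/-- A path whose vertices avoid `S` gives avoiding reachability. -/
lemma myPathRA {p : List (Fin c)} (h : IsDipathFromTo R p a b) (hS : ∀ x ∈ p, x ∉ S) :
    myRA R S a b :=
  myChainReach p a b
    (myChainRestrict p h.1.2.2 (fun x y hxy hx hy => ⟨hxy, hS x hx, hS y hy⟩)) h.2.1 h.2.2

/-- A path whose vertices lie in `S` gives `ReachIn`. -/
lemma myPathReachIn {p : List (Fin c)} (h : IsDipathFromTo R p a b) (hS : ∀ x ∈ p, x ∈ S) :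
    ReachIn R S a b :=
  myChainReach p a b
    (myChainRestrict p h.1.2.2 (fun x y hxy hx hy => ⟨hxy, hS x hx, hS y hy⟩)) h.2.1 h.2.2

/-- Suffix of a path is a path. -/
lemma myPathSuffix {p₁ p₂ : List (Fin c)} (h : IsDipathFromTo R (p₁ ++ v :: p₂) a b) :
    IsDipathFromTo R (v :: p₂) v b := by
  obtain ⟨⟨hne, hn, hc⟩, hh, hl⟩ := h
  refine ⟨⟨by simp, hn.sublist (List.sublist_append_right p₁ _), (List.isChain_append.mp hc).2.1⟩,
    by simp, ?_⟩
  cases h2 : (v :: p₂).getLast? with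
  | none => simp at h2
  | some w =>
    rw [List.getLast?_append, h2] at hl
    simp only [Option.or_some, Option.or] at hl
    exact hl

/-- Prefix of a path is a path. -/
lemma myPathPrefix {p₁ p₂ : List (Fin c)} (h : IsDipathFromTo R (p₁ ++ v :: p₂) a b) :
    IsDipathFromTo R (p₁ ++ [v]) a v := by
  obtain ⟨⟨hne, hn, hc⟩, hh, hl⟩ := h
  have heq : p₁ ++ v :: p₂ = (p₁ ++ [v]) ++ p₂ := by simp
  rw [heq] at hc hn
  refine ⟨⟨by simp, (List.nodup_append.mp hn).1, (List.isChain_append.mp hc).1⟩, ?_, ?_⟩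
  · cases p₁ with
    | nil => simpa using hh
    | cons z t => simpa using hh
  · rw [List.getLast?_append]; rfl

lemma myUsetMem {r i k : Fin c} :
    k ∈ Uset R r i ↔ ∀ p : List (Fin c), IsDipathFromTo R p k r → i ∈ p := by
  classical
  rw [Uset]
  rw [Finset.mem_filter]
  simp

lemma myUself {r i : Fin c} : i ∈ Uset R r i :=
  myUsetMem.mpr (fun p hp => myHeadMem hp)

lemma myUtrans {r k v y : Fin c} (h1 : k ∈ Uset R r v) (h2 : v ∈ Uset R r y) :
    k ∈ Uset R r y := by
  rw [myUsetMem] at *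
  intro p hp
  have hv : v ∈ p := h1 p hp
  obtain ⟨p₁, p₂, rfl⟩ := List.append_of_mem hv
  have := h2 _ (myPathSuffix hp)
  simp at this ⊢
  tauto

/-- If `v` lies on a path from `i` to `r` and every path from `v` to `r` passes `i`,
then `v = i`. -/
lemma myUL2 {r i : Fin c} {q : List (Fin c)} (hq : IsDipathFromTo R q i r)
    (hv : v ∈ q) (hvU : v ∈ Uset R r i) : v = i := by
  by_contra hne
  obtain ⟨q₁, q₂, rfl⟩ := List.append_of_mem hv
  have hsuf := myPathSuffix hq
  have hiq : i ∈ v :: q₂ := myUsetMem.mp hvU _ hsuf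
  have hi2 : i ∈ q₂ := by
    rcases List.mem_cons.mp hiq with h | h
    · exact absurd h.symm hne
    · exact h
  have hq1 : q₁ ≠ [] := by
    intro h0
    rw [h0] at hq
    have := hq.2.1
    simp at this
    exact hne this
  have hi1 : i ∈ q₁ := by
    have := hq.2.1
    rw [List.head?_append_of_ne_nil _ hq1] at this
    exact List.mem_of_mem_head? (by rw [this]; simp)
  have hn := hq.1.2.1
  rw [List.nodup_append'] at hn
  exact hn.2.2 hi1 (by simp [hi2])

end Graph
section Menger
variable {c : ℕ}

/-- `S` separates `A` from `B` in the digraph `R`. -/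
def mySep (R : Finset (Fin c × Fin c)) (A B S : Finset (Fin c)) : Prop :=
  ∀ a ∈ A, ∀ b ∈ B, a ∉ S → b ∉ S → ¬ myRA R S a b

/-- A path from `A` to `B` meeting `A` only at its head and `B` only at its last. -/
def myGood (R : Finset (Fin c × Fin c)) (A B : Finset (Fin c)) (p : List (Fin c)) : Prop :=
  IsDipath R p ∧ (∃ a ∈ A, p.head? = some a) ∧ (∃ b ∈ B, p.getLast? = some b) ∧
    (∀ x ∈ p.dropLast, x ∉ B) ∧ (∀ x ∈ p.tail, x ∉ A)

/-- Two disjoint `A`–`B` paths. -/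
def myTwoFan (R : Finset (Fin c × Fin c)) (A B : Finset (Fin c)) : Prop :=
  ∃ p q, myGood R A B p ∧ myGood R A B q ∧ Disjoint p.toFinset q.toFinset

variable {R : Finset (Fin c × Fin c)} {A B S T : Finset (Fin c)} {a b u v s : Fin c}

lemma myRAanti (hST : S ⊆ T) (h : myRA R T a b) : myRA R S a b :=
  Relation.ReflTransGen.mono (r := myStepA R T) (p := myStepA R S)
    (fun x y hxy => ⟨hxy.1, fun hx => hxy.2.1 (hST hx),
    fun hy => hxy.2.2 (hST hy)⟩) _ _ h

lemma myRAerase {e : Fin c × Fin c} (h : myRA (R.erase e) T a b) : myRA R T a b :=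
  Relation.ReflTransGen.mono (r := myStepA (R.erase e) T) (p := myStepA R T)
    (fun x y hxy => ⟨Finset.mem_of_mem_erase hxy.1, hxy.2.1, hxy.2.2⟩) _ _ h

/-- Either reach avoiding also `s`, or reach `s` itself. -/
lemma myFirstV (h : myRA R T a b) : myRA R (insert s T) a b ∨ myRA R T a s := by
  induction h using Relation.ReflTransGen.head_induction_on with
  | refl =>
    by_cases hbs : b = s
    · subst hbs; exact Or.inr Relation.ReflTransGen.refl
    · exact Or.inl Relation.ReflTransGen.refl
  | head hstep hrest ih =>
    rename_i x y
    by_cases hxs : x = s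
    · subst hxs; exact Or.inr Relation.ReflTransGen.refl
    · by_cases hys : y = s
      · subst hys; exact Or.inr (Relation.ReflTransGen.single hstep)
      · rcases ih with h1 | h1
        · exact Or.inl (Relation.ReflTransGen.head
            ⟨hstep.1, by simp [hxs, hstep.2.1], by simp [hys, hstep.2.2]⟩ h1)
        · exact Or.inr (Relation.ReflTransGen.head hstep h1)

/-- Either reach avoiding also `s`, or reach from `s`. -/
lemma myLastV (h : myRA R T a b) : myRA R (insert s T) a b ∨ myRA R T s b := by
  induction h with
  | refl =>
    by_cases has : a = s
    · subst has; exact Or.inr Relation.ReflTransGen.refl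
    · exact Or.inl Relation.ReflTransGen.refl
  | @tail x y hax hstep ih =>
    by_cases hys : y = s
    · subst hys; exact Or.inr Relation.ReflTransGen.refl
    · by_cases hxs : x = s
      · subst hxs; exact Or.inr (Relation.ReflTransGen.single hstep)
      · rcases ih with h1 | h1
        · exact Or.inl (Relation.ReflTransGen.tail h1
            ⟨hstep.1, by simp [hxs, hstep.2.1], by simp [hys, hstep.2.2]⟩)
        · exact Or.inr (Relation.ReflTransGen.tail h1 hstep)

/-- Decompose a walk at the first use of the arc `(u,v)`. -/
lemma myDecomp1 (h : myRA R T a b) :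
    myRA (R.erase (u, v)) T a b ∨
      (myRA (R.erase (u, v)) T a u ∧ u ∉ T ∧ v ∉ T ∧ myRA R T v b) := by
  induction h using Relation.ReflTransGen.head_induction_on with
  | refl => exact Or.inl Relation.ReflTransGen.refl
  | head hstep hrest ih =>
    rename_i x y
    by_cases he : (x, y) = (u, v)
    · have hx : x = u := (Prod.mk.injEq .. ▸ he).1
      have hy : y = v := (Prod.mk.injEq .. ▸ he).2
      subst hx; subst hy
      exact Or.inr ⟨Relation.ReflTransGen.refl, hstep.2.1, hstep.2.2, hrest⟩
    · have hstep' : myStepA (R.erase (u, v)) T x y :=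
        ⟨Finset.mem_erase.mpr ⟨he, hstep.1⟩, hstep.2.1, hstep.2.2⟩
      rcases ih with h1 | ⟨h1, h2, h3, h4⟩
      · exact Or.inl (Relation.ReflTransGen.head hstep' h1)
      · exact Or.inr ⟨Relation.ReflTransGen.head hstep' h1, h2, h3, h4⟩

/-- Decompose a walk at the last use of the arc `(u,v)`. -/
lemma myDecomp2 (h : myRA R T a b) :
    myRA (R.erase (u, v)) T a b ∨
      (u ∉ T ∧ v ∉ T ∧ myRA (R.erase (u, v)) T v b) := by
  induction h with
  | refl => exact Or.inl Relation.ReflTransGen.refl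
  | @tail x y hax hstep ih =>
    by_cases he : (x, y) = (u, v)
    · have hx : x = u := (Prod.mk.injEq .. ▸ he).1
      have hy : y = v := (Prod.mk.injEq .. ▸ he).2
      subst hx; subst hy
      exact Or.inr ⟨hstep.2.1, hstep.2.2, Relation.ReflTransGen.refl⟩
    · have hstep' : myStepA (R.erase (u, v)) T x y :=
        ⟨Finset.mem_erase.mpr ⟨he, hstep.1⟩, hstep.2.1, hstep.2.2⟩
      rcases ih with h1 | ⟨h1, h2, h3⟩
      · exact Or.inl (Relation.ReflTransGen.tail h1 hstep')
      · exact Or.inr ⟨h1, h2, Relation.ReflTransGen.tail h3 hstep'⟩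

end Menger
section Menger2
variable {c : ℕ}
lemma myGetLastAppend {α : Type*} {l₁ l₂ : List α} {b : α} (h : l₂.getLast? = some b) :
    (l₁ ++ l₂).getLast? = some b := by
  rw [List.getLast?_append, h]; rfl

variable {R : Finset (Fin c × Fin c)} {A B S : Finset (Fin c)} {a b u v s : Fin c}

lemma myMemSplitLast {p : List (Fin c)} (hp : IsDipathFromTo R p a b) {x : Fin c}
    (hx : x ∈ p) : x ∈ p.dropLast ∨ x = b := by
  have hne : p ≠ [] := hp.1.1
  have hsplit : p.dropLast ++ [p.getLast hne] = p := List.dropLast_append_getLast hne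
  have hb : p.getLast hne = b := by
    have := hp.2.2
    rw [List.getLast?_eq_getLast hne] at this
    simpa using this
  rw [← hsplit] at hx
  rcases List.mem_append.mp hx with h | h
  · exact Or.inl h
  · simp at h; right; rw [h, hb]

lemma myMemSplitHead {p : List (Fin c)} (hp : IsDipathFromTo R p a b) {x : Fin c}
    (hx : x ∈ p) : x = a ∨ x ∈ p.tail := by
  cases p with
  | nil => simp at hx
  | cons y t =>
    have : y = a := by have := hp.2.1; simpa using this
    subst this
    rcases List.mem_cons.mp hx with h | h
    · exact Or.inl h
    · exact Or.inr h

/-- The master crossing lemma: two paths on the two sides of a single separating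
vertex `s` cannot share a vertex other than `s`. -/
lemma myCross (hSep : mySep R A B {s}) {p q : List (Fin c)} {tp hq0 : Fin c}
    (hp : IsDipathFromTo R p a tp) (haA : a ∈ A) (hps : s ∉ p.dropLast)
    (hq : IsDipathFromTo R q hq0 b) (hbB : b ∈ B) (hqs : s ∉ q.tail)
    {z : Fin c} (hzp : z ∈ p) (hzq : z ∈ q) (hzs : z ≠ s) : False := by
  obtain ⟨p₁, p₂, rfl⟩ := List.append_of_mem hzp
  obtain ⟨q₁, q₂, rfl⟩ := List.append_of_mem hzq
  have hpre := myPathPrefix hp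
  have hsuf := myPathSuffix hq
  have hpreS : ∀ x ∈ p₁ ++ [z], x ∉ ({s} : Finset (Fin c)) := by
    intro x hxm hxs
    simp at hxs; subst hxs
    rcases List.mem_append.mp hxm with h | h
    · refine hps ?_
      have : (p₁ ++ z :: p₂).dropLast = p₁ ++ (z :: p₂).dropLast := by
        rw [List.dropLast_append_of_ne_nil (by simp)]
      rw [this]
      exact List.mem_append.mpr (Or.inl h)
    · simp at h; exact hzs h.symm
  have hsufS : ∀ x ∈ z :: q₂, x ∉ ({s} : Finset (Fin c)) := by
    intro x hxm hxs
    simp at hxs; subst hxs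
    rcases List.mem_cons.mp hxm with h | h
    · exact hzs h.symm
    · refine hqs ?_
      cases q₁ with
      | nil => simpa using h
      | cons w t => simp [h]
  have r1 : myRA R {s} a z := myPathRA hpre hpreS
  have r2 : myRA R {s} z b := myPathRA hsuf hsufS
  have haS : a ∉ ({s} : Finset (Fin c)) := hpreS a (myHeadMem hpre)
  have hbS : b ∉ ({s} : Finset (Fin c)) := hsufS b (myLastMem hsuf)
  exact hSep a haA b hbB haS hbS (Relation.ReflTransGen.trans r1 r2)

/-- Trim a path from `A` to `B` to a good one. -/
lemma myTrim : ∀ (n : ℕ) (p : List (Fin c)) (a b : Fin c), p.length ≤ n →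
    IsDipathFromTo R p a b → a ∈ A → b ∈ B →
    ∃ p', myGood R A B p' ∧ p'.toFinset ⊆ p.toFinset := by
  intro n
  induction n with
  | zero =>
    intro p a b hlen hp _ _
    exact absurd (List.length_eq_zero_iff.mp (Nat.le_zero.mp hlen)) hp.1.1
  | succ m ih =>
    intro p a b hlen hp haA hbB
    by_cases h₁ : ∃ x ∈ p.tail, x ∈ A
    · obtain ⟨x, hxt, hxA⟩ := h₁
      cases hpp : p with
      | nil => exact absurd hpp hp.1.1
      | cons y t =>
        rw [hpp] at hxt; simp at hxt
        obtain ⟨t₁, t₂, rfl⟩ := List.append_of_mem hxt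
        have hsuf : IsDipathFromTo R (x :: t₂) x b := by
          have : p = (y :: t₁) ++ x :: t₂ := by simp [hpp]
          exact myPathSuffix (this ▸ hp)
        have hlen' : (x :: t₂).length ≤ m := by
          have : p.length = t₁.length + t₂.length + 2 := by simp [hpp]; omega
          simp at this ⊢
          omega
        obtain ⟨p', hg, hsub⟩ := ih (x :: t₂) x b hlen' hsuf hxA hbB
        refine ⟨p', hg, hsub.trans ?_⟩
        intro z hz
        simp [hpp] at hz ⊢
        tauto
    · by_cases h₂ : ∃ x ∈ p.dropLast, x ∈ B
      · have hex : ∃ x ∈ p, x ∈ B := by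
          obtain ⟨x, hx, hxB⟩ := h₂
          exact ⟨x, List.mem_of_mem_dropLast hx, hxB⟩
        obtain ⟨p₁, x, p₂, heq, hxB, hnone⟩ := myFirstSplit (· ∈ B) p hex
        have hpre : IsDipathFromTo R (p₁ ++ [x]) a x := myPathPrefix (heq ▸ hp)
        have hp₂ : p₂ ≠ [] := by
          rintro rfl
          obtain ⟨x', hx', hxB'⟩ := h₂
          rw [heq] at hx'
          rw [List.dropLast_append_of_ne_nil (by simp)] at hx'
          simp at hx'
          exact hnone x' hx' hxB'
        refine ⟨p₁ ++ [x], ⟨hpre.1, ⟨a, haA, hpre.2.1⟩, ⟨x, hxB, hpre.2.2⟩, ?_, ?_⟩, ?_⟩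
        · intro z hz
          simp at hz
          exact hnone z hz
        · intro z hz hzA
          refine h₁ ⟨z, ?_, hzA⟩
          rw [heq]
          have hEq : (p₁ ++ [x]).tail ++ p₂ = (p₁ ++ x :: p₂).tail := by
            cases p₁ <;> simp
          rw [← hEq]
          exact List.mem_append.mpr (Or.inl hz)
        · intro z hz
          simp at hz
          rw [heq]
          simp
          tauto
      · refine ⟨p, ⟨hp.1, ⟨a, haA, hp.2.1⟩, ⟨b, hbB, hp.2.2⟩, ?_, ?_⟩, le_refl _⟩
        · intro z hz hzB; exact h₂ ⟨z, hz, hzB⟩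
        · intro z hz hzA; exact h₁ ⟨z, hz, hzA⟩

lemma myGoodMono {R' : Finset (Fin c × Fin c)} (hRR : R ⊆ R') {p : List (Fin c)}
    (h : myGood R A B p) : myGood R' A B p :=
  ⟨⟨h.1.1, h.1.2.1, List.IsChain.imp (fun x y hxy => hRR hxy) h.1.2.2⟩, h.2.1, h.2.2.1,
    h.2.2.2.1, h.2.2.2.2⟩

lemma myTwoFanMono {R' : Finset (Fin c × Fin c)} (hRR : R ⊆ R') (h : myTwoFan R A B) :
    myTwoFan R' A B := by
  obtain ⟨p, q, hp, hq, hd⟩ := h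
  exact ⟨p, q, myGoodMono hRR hp, myGoodMono hRR hq, hd⟩

end Menger2
section Menger3
variable {c : ℕ}
variable {R : Finset (Fin c × Fin c)} {A B : Finset (Fin c)} {a b u v s : Fin c}

lemma myPathMono {R' : Finset (Fin c × Fin c)} (hRR : R ⊆ R') {p : List (Fin c)}
    (h : IsDipathFromTo R p a b) : IsDipathFromTo R' p a b :=
  ⟨⟨h.1.1, h.1.2.1, List.IsChain.imp (fun x y hxy => hRR hxy) h.1.2.2⟩, h.2.1, h.2.2⟩

lemma myGlue1 {p q : List (Fin c)} (hp : IsDipathFromTo R p a s)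
    (hq : IsDipathFromTo R q s b) (hstail : s ∉ q.tail)
    (hcap : ∀ z, z ∈ p → z ∈ q → z = s) :
    IsDipathFromTo R (p ++ q.tail) a b := by
  cases hq0 : q with
  | nil => exact absurd hq0 hq.1.1
  | cons y t =>
    subst hq0
    have hy : y = s := by have := hq.2.1; simpa using this
    subst hy
    have hchq := hq.1.2.2
    rw [myChain'_iff, List.isChain_cons] at hchq
    refine ⟨⟨by simp [hp.1.1], ?_, ?_⟩, ?_, ?_⟩
    · rw [List.nodup_append']
      refine ⟨hp.1.2.1, (List.nodup_cons.mp hq.1.2.1).2, ?_⟩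
      intro z hz hz'
      have := hcap z hz (List.mem_cons_of_mem _ hz')
      subst this
      exact hstail hz'
    · rw [myChain'_iff, List.isChain_append]
      refine ⟨hp.1.2.2, hchq.2, ?_⟩
      intro x hx z hz
      rw [hp.2.2] at hx
      simp at hx; subst hx
      exact hchq.1 z hz
    · rw [List.head?_append_of_ne_nil _ hp.1.1]; exact hp.2.1
    · simp only [List.tail_cons]
      cases ht : t with
      | nil =>
        have hby : b = y := by
          have h5 := hq.2.2
          rw [ht] at h5; simpa using h5.symm
        subst hby
        simpa using hp.2.2
      | cons w t' =>
        have hlt : (w :: t').getLast? = some b := by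
          have h5 := hq.2.2
          rw [ht] at h5
          rw [List.getLast?_cons_cons] at h5
          exact h5
        exact myGetLastAppend hlt

lemma myGlue2 {p q : List (Fin c)} (hp : IsDipathFromTo R p a u)
    (hq : IsDipathFromTo R q v b) (he : (u, v) ∈ R)
    (hcap : ∀ z, z ∈ p → z ∈ q → False) :
    IsDipathFromTo R (p ++ q) a b := by
  refine ⟨⟨by simp [hp.1.1], ?_, ?_⟩, ?_, ?_⟩
  · rw [List.nodup_append']
    exact ⟨hp.1.2.1, hq.1.2.1, fun z hz hz' => hcap z hz hz'⟩
  · rw [myChain'_iff, List.isChain_append]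
    refine ⟨hp.1.2.2, hq.1.2.2, ?_⟩
    intro x hx z hz
    rw [hp.2.2] at hx; rw [hq.2.1] at hz
    simp at hx hz; subst hx; subst hz
    exact he
  · rw [List.head?_append_of_ne_nil _ hp.1.1]; exact hp.2.1
  · exact myGetLastAppend hq.2.2

lemma mySM2base (hR : R = ∅) (hcut : ∀ S, mySep R A B S → 2 ≤ S.card) :
    myTwoFan R A B := by
  subst hR
  have hRA : ∀ (x y : Fin c) (S : Finset (Fin c)),
      myRA (∅ : Finset (Fin c × Fin c)) S x y → x = y := by
    intro x y S h
    rcases Relation.ReflTransGen.cases_head h with h1 | ⟨z, hz, _⟩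
    · exact h1
    · exact absurd hz.1 (by simp)
  have h0 : ¬ mySep (∅ : Finset (Fin c × Fin c)) A B ∅ := by
    intro hs; have := hcut ∅ hs; simp at this
  unfold mySep at h0
  push_neg at h0
  obtain ⟨a, ha, b, hb, _, _, hab⟩ := h0
  obtain rfl := hRA a b ∅ hab
  have h1 : ¬ mySep (∅ : Finset (Fin c × Fin c)) A B {a} := by
    intro hs; have := hcut {a} hs; simp at this
  unfold mySep at h1
  push_neg at h1
  obtain ⟨a', ha', b', hb', haa, _, hab2⟩ := h1
  obtain rfl := hRA a' b' {a} hab2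
  refine ⟨[a], [a'], ?_, ?_, ?_⟩
  · exact ⟨⟨by simp, by simp, by simp⟩, ⟨a, ha, by simp⟩, ⟨a, hb, by simp⟩, by simp, by simp⟩
  · exact ⟨⟨by simp, by simp, by simp⟩, ⟨a', ha', by simp⟩, ⟨a', hb', by simp⟩, by simp, by simp⟩
  · have hne : a' ≠ a := by intro h; exact haa (by simp [h])
    rw [show ([a] : List (Fin c)).toFinset = {a} from by simp,
      show ([a'] : List (Fin c)).toFinset = {a'} from by simp]
    exact Finset.disjoint_singleton.mpr fun h => hne h.symm

theorem mySM2 : ∀ (n : ℕ) (R : Finset (Fin c × Fin c)) (A B : Finset (Fin c)),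
    R.card ≤ n → (∀ x, (x, x) ∉ R) →
    (∀ S, mySep R A B S → 2 ≤ S.card) → myTwoFan R A B := by
  intro n
  induction n with
  | zero =>
    intro R A B hcard _ hcut
    exact mySM2base (Finset.card_eq_zero.mp (Nat.le_zero.mp hcard)) hcut
  | succ m ih =>
    intro R A B hcard hloop hcut
    by_cases hRe : R = ∅
    · exact mySM2base hRe hcut
    · obtain ⟨⟨u, v⟩, he⟩ := Finset.nonempty_of_ne_empty hRe
      have huv : u ≠ v := by rintro rfl; exact hloop u he
      have hcard' : (R.erase (u, v)).card ≤ m := by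
        rw [Finset.card_erase_of_mem he]; omega
      have hloop' : ∀ x, (x, x) ∉ R.erase (u, v) :=
        fun x hx => hloop x (Finset.mem_of_mem_erase hx)
      by_cases hS : ∀ S, mySep (R.erase (u, v)) A B S → 2 ≤ S.card
      · exact myTwoFanMono (Finset.erase_subset _ _) (ih _ A B hcard' hloop' hS)
      · push_neg at hS
        obtain ⟨S, hSepS0, hcardS⟩ := hS
        have hSu : mySep R A B (insert u S) := by
          intro a ha b hb haS hbS hra
          refine hSepS0 a ha b hb (fun h => haS (Finset.mem_insert_of_mem h))
            (fun h => hbS (Finset.mem_insert_of_mem h)) ?_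
          refine Relation.ReflTransGen.mono ?_ _ _ hra
          rintro x y ⟨hxy, hx, hy⟩
          refine ⟨Finset.mem_erase.mpr ⟨?_, hxy⟩, fun h => hx (Finset.mem_insert_of_mem h),
            fun h => hy (Finset.mem_insert_of_mem h)⟩
          intro hEq
          have : x = u := by rw [Prod.mk.injEq] at hEq; exact hEq.1
          exact hx (this ▸ Finset.mem_insert_self u S)
        have hSv : mySep R A B (insert v S) := by
          intro a ha b hb haS hbS hra
          refine hSepS0 a ha b hb (fun h => haS (Finset.mem_insert_of_mem h))
            (fun h => hbS (Finset.mem_insert_of_mem h)) ?_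
          refine Relation.ReflTransGen.mono ?_ _ _ hra
          rintro x y ⟨hxy, hx, hy⟩
          refine ⟨Finset.mem_erase.mpr ⟨?_, hxy⟩, fun h => hx (Finset.mem_insert_of_mem h),
            fun h => hy (Finset.mem_insert_of_mem h)⟩
          intro hEq
          have : y = v := by rw [Prod.mk.injEq] at hEq; exact hEq.2
          exact hy (this ▸ Finset.mem_insert_self v S)
        have h2u := hcut _ hSu
        have h2v := hcut _ hSv
        have hcu : u ∉ S := by
          intro h; rw [Finset.insert_eq_self.mpr h] at h2u; omega
        have hcv : v ∉ S := by
          intro h; rw [Finset.insert_eq_self.mpr h] at h2v; omega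
        have hS1 : S.card = 1 := by
          have h3 := Finset.card_insert_le u S
          omega
        obtain ⟨s, rfl⟩ := Finset.card_eq_one.mp hS1
        have hsu : s ≠ u := by rintro rfl; exact hcu (by simp)
        have hsv : s ≠ v := by rintro rfl; exact hcv (by simp)
        have hypA : ∀ T, mySep (R.erase (u, v)) A (insert s {u}) T → 2 ≤ T.card := by
          intro T hT
          apply hcut
          intro a ha b hb haT hbT hra
          rcases myDecomp1 (u := u) (v := v) hra with h1 | ⟨hau, huT, _, _⟩
          · by_cases hsT : s ∈ T
            · exact hSepS0 a ha b hb (by simp; rintro rfl; exact haT hsT)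
                (by simp; rintro rfl; exact hbT hsT)
                (myRAanti (Finset.singleton_subset_iff.mpr hsT) h1)
            · rcases myFirstV (s := s) h1 with h2 | h2
              · by_cases has : a = s
                · exact hT a ha a (by simp [has]) haT haT Relation.ReflTransGen.refl
                · by_cases hbs : b = s
                  · exact hT a ha b (by simp [hbs]) haT hbT h1
                  · exact hSepS0 a ha b hb (by simp [has]) (by simp [hbs])
                      (myRAanti (Finset.singleton_subset_iff.mpr
                        (Finset.mem_insert_self s T)) h2)
              · exact hT a ha s (by simp) haT hsT h2
          · exact hT a ha u (by simp) haT huT hau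
        have hypB : ∀ T, mySep (R.erase (u, v)) (insert s {v}) B T → 2 ≤ T.card := by
          intro T hT
          apply hcut
          intro a ha b hb haT hbT hra
          rcases myDecomp2 (u := u) (v := v) hra with h1 | ⟨_, hvT, hvb⟩
          · by_cases hsT : s ∈ T
            · exact hSepS0 a ha b hb (by simp; rintro rfl; exact haT hsT)
                (by simp; rintro rfl; exact hbT hsT)
                (myRAanti (Finset.singleton_subset_iff.mpr hsT) h1)
            · rcases myLastV (s := s) h1 with h2 | h2
              · by_cases has : a = s
                · exact hT a (by simp [has]) b hb haT hbT h1
                · by_cases hbs : b = s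
                  · exact hT b (by simp [hbs]) b hb hbT hbT Relation.ReflTransGen.refl
                  · exact hSepS0 a ha b hb (by simp [has]) (by simp [hbs])
                      (myRAanti (Finset.singleton_subset_iff.mpr
                        (Finset.mem_insert_self s T)) h2)
              · exact hT s (by simp) b hb hsT hbT h2
          · exact hT v (by simp) b hb hvT hbT hvb
        obtain ⟨pa, pb, gpa, gpb, disA⟩ := ih _ A (insert s {u}) hcard' hloop' hypA
        obtain ⟨qa, qb, gqa, gqb, disB⟩ := ih _ (insert s {v}) B hcard' hloop' hypB
        -- assign the two ends
        have hassignP : ∃ ps pu, myGood (R.erase (u, v)) A (insert s {u}) ps ∧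
            myGood (R.erase (u, v)) A (insert s {u}) pu ∧
            Disjoint ps.toFinset pu.toFinset ∧
            ps.getLast? = some s ∧ pu.getLast? = some u := by
          obtain ⟨ta, hta, hlpa⟩ := gpa.2.2.1
          obtain ⟨tb, htb, hlpb⟩ := gpb.2.2.1
          have htane : ta ≠ tb := by
            rintro rfl
            exact (Finset.disjoint_left.mp disA
              (List.mem_toFinset.mpr (List.mem_of_getLast? hlpa)))
              (List.mem_toFinset.mpr (List.mem_of_getLast? hlpb))
          simp only [Finset.mem_insert, Finset.mem_singleton] at hta htb
          rcases hta with rfl | rfl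
          · rcases htb with h | rfl
            · exact absurd h.symm htane
            · exact ⟨pa, pb, gpa, gpb, disA, hlpa, hlpb⟩
          · rcases htb with rfl | h
            · exact ⟨pb, pa, gpb, gpa, disA.symm, hlpb, hlpa⟩
            · exact absurd h.symm htane
        have hassignQ : ∃ qs qv, myGood (R.erase (u, v)) (insert s {v}) B qs ∧
            myGood (R.erase (u, v)) (insert s {v}) B qv ∧
            Disjoint qs.toFinset qv.toFinset ∧
            qs.head? = some s ∧ qv.head? = some v := by
          obtain ⟨ha', hha, hhqa⟩ := gqa.2.1
          obtain ⟨hb', hhb, hhqb⟩ := gqb.2.1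
          have hne : ha' ≠ hb' := by
            rintro rfl
            exact (Finset.disjoint_left.mp disB
              (List.mem_toFinset.mpr (myHeadMemOf hhqa)))
              (List.mem_toFinset.mpr (myHeadMemOf hhqb))
          simp only [Finset.mem_insert, Finset.mem_singleton] at hha hhb
          rcases hha with rfl | rfl
          · rcases hhb with h | rfl
            · exact absurd h.symm hne
            · exact ⟨qa, qb, gqa, gqb, disB, hhqa, hhqb⟩
          · rcases hhb with rfl | h
            · exact ⟨qb, qa, gqb, gqa, disB.symm, hhqb, hhqa⟩
            · exact absurd h.symm hne
        obtain ⟨ps, pu, gps, gpu, disP, hlps, hlpu⟩ := hassignP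
        obtain ⟨qs, qv, gqs, gqv, disQ, hhqs, hhqv⟩ := hassignQ
        obtain ⟨aps, hapsA, hhps⟩ := gps.2.1
        obtain ⟨apu, hapuA, hhpu⟩ := gpu.2.1
        obtain ⟨bqs, hbqsB, hlqs⟩ := gqs.2.2.1
        obtain ⟨bqv, hbqvB, hlqv⟩ := gqv.2.2.1
        have Pps : IsDipathFromTo (R.erase (u, v)) ps aps s := ⟨gps.1, hhps, hlps⟩
        have Ppu : IsDipathFromTo (R.erase (u, v)) pu apu u := ⟨gpu.1, hhpu, hlpu⟩
        have Pqs : IsDipathFromTo (R.erase (u, v)) qs s bqs := ⟨gqs.1, hhqs, hlqs⟩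
        have Pqv : IsDipathFromTo (R.erase (u, v)) qv v bqv := ⟨gqv.1, hhqv, hlqv⟩
        have hsdps : s ∉ ps.dropLast := fun h => gps.2.2.2.1 s h (by simp)
        have hsdpu : s ∉ pu.dropLast := fun h => gpu.2.2.2.1 s h (by simp)
        have hstqs : s ∉ qs.tail := fun h => gqs.2.2.2.2 s h (by simp)
        have hstqv : s ∉ qv.tail := fun h => gqv.2.2.2.2 s h (by simp)
        have hsnpu : s ∉ pu := by
          intro h
          rcases myMemSplitLast Ppu h with h1 | h1
          · exact hsdpu h1
          · exact hsu h1
        have hsnqv : s ∉ qv := by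
          intro h
          rcases myMemSplitHead Pqv h with h1 | h1
          · exact hsv h1
          · exact hstqv h1
        -- crossing facts
        have f1 : ∀ z, z ∈ ps → z ∈ qs → z = s := by
          intro z hzp hzq
          by_contra hzs
          exact myCross hSepS0 Pps hapsA hsdps Pqs hbqsB hstqs hzp hzq hzs
        have f2 : ∀ z, z ∈ ps → z ∈ qv → False := by
          intro z hzp hzq
          by_cases hzs : z = s
          · exact hsnqv (hzs ▸ hzq)
          · exact myCross hSepS0 Pps hapsA hsdps Pqv hbqvB hstqv hzp hzq hzs
        have f3 : ∀ z, z ∈ pu → z ∈ qs → False := by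
          intro z hzp hzq
          by_cases hzs : z = s
          · exact hsnpu (hzs ▸ hzp)
          · exact myCross hSepS0 Ppu hapuA hsdpu Pqs hbqsB hstqs hzp hzq hzs
        have f4 : ∀ z, z ∈ pu → z ∈ qv → False := by
          intro z hzp hzq
          by_cases hzs : z = s
          · exact hsnpu (hzs ▸ hzp)
          · exact myCross hSepS0 Ppu hapuA hsdpu Pqv hbqvB hstqv hzp hzq hzs
        -- glue
        have hsub : R.erase (u, v) ⊆ R := Finset.erase_subset _ _
        have G1 : IsDipathFromTo R (ps ++ qs.tail) aps bqs :=
          myGlue1 (myPathMono hsub Pps) (myPathMono hsub Pqs) hstqs f1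
        have G2 : IsDipathFromTo R (pu ++ qv) apu bqv :=
          myGlue2 (myPathMono hsub Ppu) (myPathMono hsub Pqv) he f4
        have hdisj : Disjoint (ps ++ qs.tail).toFinset (pu ++ qv).toFinset := by
          rw [Finset.disjoint_left]
          intro z hz1 hz2
          simp only [List.toFinset_append, Finset.mem_union, List.mem_toFinset] at hz1 hz2
          rcases hz1 with hz1 | hz1 <;> rcases hz2 with hz2 | hz2
          · exact (Finset.disjoint_left.mp disP (List.mem_toFinset.mpr hz1))
              (List.mem_toFinset.mpr hz2)
          · exact f2 z hz1 hz2
          · exact f3 z hz2 (List.mem_of_mem_tail hz1)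
          · exact (Finset.disjoint_left.mp disQ
              (List.mem_toFinset.mpr (List.mem_of_mem_tail hz1)))
              (List.mem_toFinset.mpr hz2)
        obtain ⟨P₁, gP₁, hsub₁⟩ :=
          myTrim (A := A) (B := B) (ps ++ qs.tail).length _ aps bqs le_rfl G1 hapsA hbqsB
        obtain ⟨P₂, gP₂, hsub₂⟩ :=
          myTrim (A := A) (B := B) (pu ++ qv).length _ apu bqv le_rfl G2 hapuA hbqvB
        exact ⟨P₁, P₂, gP₁, gP₂,
          Finset.disjoint_of_subset_left hsub₁ (Finset.disjoint_of_subset_right hsub₂ hdisj)⟩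

end Menger3
section ML
variable {c : ℕ}

lemma myChainAll {P : Fin c → Prop} {rel : Fin c → Fin c → Prop}
    (hrel : ∀ x y, rel x y → P y) :
    ∀ (p : List (Fin c)) (a : Fin c), p.Chain' rel → p.head? = some a → P a →
      ∀ x ∈ p, P x := by
  intro p
  induction p with
  | nil => intro a _ h; simp at h
  | cons y t ih =>
    intro a hc hh hPa x hx
    have hy : y = a := by simpa using hh
    subst hy
    rcases List.mem_cons.mp hx with rfl | hx
    · exact hPa
    · cases t with
      | nil => simp at hx
      | cons z t' =>
        have h1 := List.isChain_cons_cons.mp hc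
        exact ih z h1.2 rfl (hrel _ _ h1.1) x hx

lemma myML {R : Finset (Fin c × Fin c)} (hloop : ∀ x : Fin c, (x, x) ∉ R)
    {i j r : Fin c} (hij : i ≠ j) (hir : i ≠ r) (hjr : j ≠ r)
    (hcut : ∀ v : Fin c, v ≠ i →
      (∃ p, IsDipathFromTo R p i j ∧ v ∉ p) ∨ (∃ q, IsDipathFromTo R q i r ∧ v ∉ q)) :
    ∃ pj pc, IsDipathFromTo R pj i j ∧ IsDipathFromTo R pc i r ∧
      pj.toFinset ∩ pc.toFinset = {i} := by
  set R₀ := R.filter (fun e => e.1 ≠ i ∧ e.2 ≠ i) with hR₀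
  set A := (R.filter (fun e => e.1 = i)).image Prod.snd with hA
  set B := ({j, r} : Finset (Fin c)) with hB
  have hR₀sub : R₀ ⊆ R := Finset.filter_subset _ _
  have hAne : ∀ a ∈ A, a ≠ i := by
    intro a ha
    rw [hA] at ha
    simp only [Finset.mem_image, Finset.mem_filter] at ha
    obtain ⟨e, ⟨heR, he1⟩, he2⟩ := ha
    rintro rfl
    apply hloop a
    have : e = (a, a) := by
      rw [Prod.ext_iff]; exact ⟨he1, he2⟩
    rwa [this] at heR
  have hAarc : ∀ a ∈ A, (i, a) ∈ R := by
    intro a ha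
    rw [hA] at ha
    simp only [Finset.mem_image, Finset.mem_filter] at ha
    obtain ⟨e, ⟨heR, he1⟩, he2⟩ := ha
    have : e = (i, a) := by rw [Prod.ext_iff]; exact ⟨he1, he2⟩
    rwa [this] at heR
  -- tail of a path from i becomes an A–x path in R₀
  have htail : ∀ (p : List (Fin c)) (x : Fin c), IsDipathFromTo R p i x → x ≠ i →
      ∃ a t, a ∈ A ∧ IsDipathFromTo R₀ t a x ∧ ∀ y ∈ t, y ≠ i ∧ y ∈ p := by
    intro p x hp hxi
    cases p with
    | nil => exact absurd rfl hp.1.1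
    | cons y t =>
      have hy : y = i := by have := hp.2.1; simpa using this
      cases t with
      | nil =>
        refine absurd ?_ hxi
        have h5 := hp.2.2
        simp at h5
        rw [← hy]
        first
        | exact h5.symm
        | exact h5
      | cons a t' =>
        have harc : (i, a) ∈ R := by
          have h5 := (List.isChain_cons_cons.mp hp.1.2.2).1
          rwa [hy] at h5
        have hmemA : a ∈ A := by
          rw [hA]
          simp only [Finset.mem_image, Finset.mem_filter]
          exact ⟨(i, a), ⟨harc, rfl⟩, rfl⟩
        have hnodup := hp.1.2.1
        have hni : i ∉ a :: t' := by
          have h5 := (List.nodup_cons.mp hnodup).1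
          rwa [hy] at h5
        have hne : ∀ y ∈ a :: t', y ≠ i := by
          intro z hz hzi; subst hzi; exact hni hz
        have hchain : (a :: t').Chain' (fun x y => (x, y) ∈ R) :=
          (List.isChain_cons_cons.mp hp.1.2.2).2
        refine ⟨a, a :: t', hmemA, ⟨⟨by simp, (List.nodup_cons.mp hnodup).2, ?_⟩, by simp, ?_⟩,
          fun y hy => ⟨hne y hy, List.mem_cons_of_mem _ hy⟩⟩
        · refine myChainRestrict _ hchain ?_
          intro x' y' hxy hx' hy'
          rw [hR₀, Finset.mem_filter]
          exact ⟨hxy, hne x' hx', hne y' hy'⟩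
        · have := hp.2.2
          rwa [List.getLast?_cons_cons] at this
  have hsep : ∀ S, mySep R₀ A B S → 2 ≤ S.card := by
    intro S hS
    by_contra hlt
    push_neg at hlt
    haveI : Nonempty (Fin c) := ⟨i⟩
    have hS1 : S.card ≤ 1 := by omega
    obtain ⟨v, hSv⟩ := Finset.card_le_one_iff_subset_singleton.mp hS1
    have key : ∀ (p : List (Fin c)) (x : Fin c), IsDipathFromTo R p i x → x ≠ i → x ∈ B →
        v ∉ p → v ≠ i → False := by
      intro p x hp hxi hxB hvp hvi
      obtain ⟨a, t, haA, ht, hty⟩ := htail p x hp hxi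
      have htS : ∀ y ∈ t, y ∉ S := by
        intro y hy hyS
        have := hSv hyS
        simp at this
        subst this
        exact hvp (hty y hy).2
      exact hS a haA x hxB (htS a (myHeadMem ht)) (htS x (myLastMem ht)) (myPathRA ht htS)
    by_cases hvi : v = i
    · rcases hcut r (fun h => hir h.symm) with ⟨p, hp, hrp⟩ | ⟨q, hq, hrq⟩
      · -- path i → j missing r; vertices ≠ i avoid S ⊆ {i}
        obtain ⟨a, t, haA, ht, hty⟩ := htail p j hp (fun h => hij h.symm)
        have htS : ∀ y ∈ t, y ∉ S := by
          intro y hy hyS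
          have := hSv hyS
          simp at this
          subst this
          exact (hty y hy).1 hvi
        exact hS a haA j (by rw [hB]; simp) (htS a (myHeadMem ht)) (htS j (myLastMem ht))
          (myPathRA ht htS)
      · exact hrq (myLastMem hq)
    · rcases hcut v hvi with ⟨p, hp, hvp⟩ | ⟨q, hq, hvq⟩
      · exact key p j hp (fun h => hij h.symm) (by rw [hB]; simp) hvp hvi
      · exact key q r hq (fun h => hir h.symm) (by rw [hB]; simp) hvq hvi
  have hloop₀ : ∀ x : Fin c, (x, x) ∉ R₀ := fun x hx => hloop x (hR₀sub hx)
  obtain ⟨P₁, P₂, g₁, g₂, dis⟩ := mySM2 R₀.card R₀ A B le_rfl hloop₀ hsep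
  -- assign ends
  have hassign : ∃ Pj Pc, myGood R₀ A B Pj ∧ myGood R₀ A B Pc ∧
      Disjoint Pj.toFinset Pc.toFinset ∧ Pj.getLast? = some j ∧ Pc.getLast? = some r := by
    obtain ⟨b₁, hb₁, hl₁⟩ := g₁.2.2.1
    obtain ⟨b₂, hb₂, hl₂⟩ := g₂.2.2.1
    have hne : b₁ ≠ b₂ := by
      rintro rfl
      exact (Finset.disjoint_left.mp dis
        (List.mem_toFinset.mpr (List.mem_of_getLast? hl₁)))
        (List.mem_toFinset.mpr (List.mem_of_getLast? hl₂))
    rw [hB] at hb₁ hb₂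
    simp only [Finset.mem_insert, Finset.mem_singleton] at hb₁ hb₂
    rcases hb₁ with rfl | rfl
    · rcases hb₂ with h | rfl
      · exact absurd h.symm hne
      · exact ⟨P₁, P₂, g₁, g₂, dis, hl₁, hl₂⟩
    · rcases hb₂ with rfl | h
      · exact ⟨P₂, P₁, g₂, g₁, dis.symm, hl₂, hl₁⟩
      · exact absurd h.symm hne
  obtain ⟨Pj, Pc, gj, gc, disjc, hlj, hlc⟩ := hassign
  obtain ⟨aj, hajA, hhj⟩ := gj.2.1
  obtain ⟨ac, hacA, hhc⟩ := gc.2.1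
  have hPjni : ∀ x ∈ Pj, x ≠ i := by
    refine myChainAll (rel := fun x y => (x, y) ∈ R₀) ?_ Pj aj gj.1.2.2 hhj (hAne aj hajA)
    intro x y hxy
    rw [hR₀, Finset.mem_filter] at hxy
    exact hxy.2.2
  have hPcni : ∀ x ∈ Pc, x ≠ i := by
    refine myChainAll (rel := fun x y => (x, y) ∈ R₀) ?_ Pc ac gc.1.2.2 hhc (hAne ac hacA)
    intro x y hxy
    rw [hR₀, Finset.mem_filter] at hxy
    exact hxy.2.2
  have build : ∀ (P : List (Fin c)) (aP x : Fin c), myGood R₀ A B P → P.head? = some aP →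
      aP ∈ A → P.getLast? = some x → (∀ y ∈ P, y ≠ i) → IsDipathFromTo R (i :: P) i x := by
    intro P aP x gP hhP haP hlP hni
    refine ⟨⟨by simp, ?_, ?_⟩, by simp, ?_⟩
    · rw [List.nodup_cons]
      exact ⟨fun h => hni i h rfl, gP.1.2.1⟩
    · rw [myChain'_iff, List.isChain_cons]
      constructor
      · intro y hy
        have h6 : aP = y := by rw [hhP] at hy; simpa using hy
        rw [← h6]
        exact hAarc _ haP
      · exact List.IsChain.imp (fun x' y' h => hR₀sub h) gP.1.2.2
    · rw [show (i :: P) = [i] ++ P from rfl]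
      exact myGetLastAppend hlP
  have Gj : IsDipathFromTo R (i :: Pj) i j := build Pj aj j gj hhj hajA hlj hPjni
  have Gc : IsDipathFromTo R (i :: Pc) i r := build Pc ac r gc hhc hacA hlc hPcni
  refine ⟨i :: Pj, i :: Pc, Gj, Gc, ?_⟩
  apply Finset.ext
  intro x
  simp only [List.toFinset_cons, Finset.mem_inter, Finset.mem_insert, Finset.mem_singleton,
    List.mem_toFinset]
  constructor
  · rintro ⟨h1 | h1, h2 | h2⟩
    · exact h1
    · exact h1
    · exact h2
    · exact absurd (List.mem_toFinset.mpr h2)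
        (Finset.disjoint_left.mp disjc (List.mem_toFinset.mpr h1))
  · rintro rfl
    exact ⟨Or.inl rfl, Or.inl rfl⟩

end ML
section Main
variable {c : ℕ}

/-- Vertices all of whose paths to `r` meet the vertex set `F`. -/
noncomputable def myCutU (R : Finset (Fin c × Fin c)) (r : Fin c) (F : Finset (Fin c)) :
    Finset (Fin c) :=
  @Finset.filter _ (fun k => ∀ q : List (Fin c), IsDipathFromTo R q k r → ∃ x ∈ q, x ∈ F)
    (Classical.decPred _) Finset.univ

/-- The maximal elements of `U` under the order `x ∈ Uset R r y`. -/
noncomputable def myMaxI (R : Finset (Fin c × Fin c)) (r : Fin c) (U : Finset (Fin c)) :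
    Finset (Fin c) :=
  @Finset.filter _ (fun x => ∀ y ∈ U, x ∈ Uset R r y → x = y) (Classical.decPred _) U

variable {R : Finset (Fin c × Fin c)} {r : Fin c}

lemma myCutUmem {F : Finset (Fin c)} {k : Fin c} :
    k ∈ myCutU R r F ↔ ∀ q : List (Fin c), IsDipathFromTo R q k r → ∃ x ∈ q, x ∈ F := by
  rw [myCutU, @Finset.mem_filter _ _ (Classical.decPred _)]
  simp

lemma myMaxImem {U : Finset (Fin c)} {x : Fin c} :
    x ∈ myMaxI R r U ↔ x ∈ U ∧ ∀ y ∈ U, x ∈ Uset R r y → x = y := by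
  rw [myMaxI, @Finset.mem_filter _ _ (Classical.decPred _)]

lemma myUantisymm (hreach : ∀ k : Fin c, Reach R k r) {x y : Fin c}
    (hxy : x ∈ Uset R r y) (hyx : y ∈ Uset R r x) : x = y := by
  obtain ⟨q, hq, -⟩ := myReachPath (hreach x)
  have hyq : y ∈ q := myUsetMem.mp hxy q hq
  exact (myUL2 hq hyq hyx).symm

lemma myLam (hreach : ∀ k : Fin c, Reach R k r) {x y z : Fin c}
    (hzx : z ∈ Uset R r x) (hzy : z ∈ Uset R r y) (hxy : x ≠ y) :
    x ∈ Uset R r y ∨ y ∈ Uset R r x := by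
  by_cases hzxe : z = x
  · left; rwa [← hzxe]
  by_cases hzye : z = y
  · right; rwa [← hzye]
  by_contra hcon
  push_neg at hcon
  obtain ⟨hnxy, hnyx⟩ := hcon
  have hqx : ∃ qx, IsDipathFromTo R qx x r ∧ y ∉ qx := by
    by_contra h; push_neg at h
    exact hnxy (myUsetMem.mpr h)
  have hqy : ∃ qy, IsDipathFromTo R qy y r ∧ x ∉ qy := by
    by_contra h; push_neg at h
    exact hnyx (myUsetMem.mpr h)
  obtain ⟨qx, hqxP, hqxy⟩ := hqx
  obtain ⟨qy, hqyP, hqyx⟩ := hqy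
  obtain ⟨q, hq, -⟩ := myReachPath (hreach z)
  have hhit : ∃ w ∈ q, w = x ∨ w = y := ⟨x, myUsetMem.mp hzx q hq, Or.inl rfl⟩
  obtain ⟨q₁, t, q₂, heq, hts, hnone⟩ := myFirstSplit (fun w => w = x ∨ w = y) q hhit
  have hpre := myPathPrefix (heq ▸ hq)
  rcases hts with rfl | rfl
  · -- first hit is x : build a path z → r missing y
    have hpreY : ∀ w ∈ q₁ ++ [t], w ∉ ({y} : Finset (Fin c)) := by
      intro w hw hwy
      simp at hwy; subst hwy
      rcases List.mem_append.mp hw with h | h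
      · exact hnone w h (Or.inr rfl)
      · simp at h; exact hxy h.symm
    have r1 : myRA R {y} z t := myPathRA hpre hpreY
    have r2 : myRA R {y} t r := myPathRA hqxP (by
      intro w hw hwy; simp at hwy; subst hwy; exact hqxy hw)
    obtain ⟨p', hp', hp'F⟩ := myRAPath (r1.trans r2) (by simp [hzye])
    have : y ∈ p' := myUsetMem.mp hzy p' hp'
    exact hp'F y this (by simp)
  · -- first hit is y : build a path z → r missing x
    have hpreX : ∀ w ∈ q₁ ++ [t], w ∉ ({x} : Finset (Fin c)) := by
      intro w hw hwx
      simp at hwx; subst hwx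
      rcases List.mem_append.mp hw with h | h
      · exact hnone w h (Or.inl rfl)
      · simp at h; exact hxy h
    have r1 : myRA R {x} z t := myPathRA hpre hpreX
    have r2 : myRA R {x} t r := myPathRA hqyP (by
      intro w hw hwx; simp at hwx; subst hwx; exact hqyx hw)
    obtain ⟨p', hp', hp'F⟩ := myRAPath (r1.trans r2) (by simp [hzxe])
    have : x ∈ p' := myUsetMem.mp hzx p' hp'
    exact hp'F x this (by simp)

end Main
theorem stmt14 {c : ℕ}
    (R : Finset (Fin c × Fin c)) (hloop : ∀ v : Fin c, (v, v) ∉ R)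
    -- `{r} = C'` is the vertex set of the unique absorbing strong component (`ℓ = t = 1`):
    (r : Fin c)
    (habs : ∀ p ∈ R, p.1 ≠ r)
    (hreach : ∀ k : Fin c, Reach R k r)
    (hweak : ∀ a b : Fin c,
      Relation.ReflTransGen (fun x y => (x, y) ∈ R ∨ (y, x) ∈ R) a b)
    (hnsc : ¬ ∀ a b : Fin c, Reach R a b)
    (j : Fin c) (hj : j ≠ r) :
    Wset R r j =
      {i : Fin c | i ≠ r ∧ ∃ pj pc : List (Fin c),
        IsDipathFromTo R pj i j ∧ IsDipathFromTo R pc i r ∧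
          pj.toFinset ∩ pc.toFinset = {i}} := by
  classical
  ext i
  simp only [Wset, Set.mem_setOf_eq]
  constructor
  · -- direction ⊆
    rintro ⟨U, I, hJ, hP, hiI⟩
    have hir : i ≠ r := by
      have h5 := hP.1 hiI
      rw [Finset.mem_erase] at h5
      exact h5.1
    refine ⟨hir, ?_⟩
    by_cases hij : i = j
    · subst hij
      obtain ⟨pc, hpc, -⟩ := myReachPath (hreach i)
      refine ⟨[i], pc, ⟨⟨by simp, by simp, by simp⟩, by simp, by simp⟩, hpc, ?_⟩
      rw [show ([i] : List (Fin c)).toFinset = {i} from by simp]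
      exact Finset.inter_eq_left.mpr
        (Finset.singleton_subset_iff.mpr (List.mem_toFinset.mpr (myHeadMem hpc)))
    · have hiU : i ∈ U := by
        rw [hP.2.2]
        exact Finset.mem_biUnion.mpr ⟨i, hiI, myUself⟩
      have hcut : ∀ v : Fin c, v ≠ i →
          (∃ p, IsDipathFromTo R p i j ∧ v ∉ p) ∨
          (∃ q, IsDipathFromTo R q i r ∧ v ∉ q) := by
        intro v hvi
        by_contra hcon
        push_neg at hcon
        obtain ⟨hc1, hc2⟩ := hcon
        have hiUv : i ∈ Uset R r v := myUsetMem.mpr (fun q hq => hc2 q hq)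
        by_cases hvU : v ∈ U
        · obtain ⟨y, hyI, hvy⟩ := Finset.mem_biUnion.mp (hP.2.2 ▸ hvU)
          have hiUy : i ∈ Uset R r y := myUtrans hiUv hvy
          have hyi : y = i := by
            by_contra hne
            have hdis := hP.2.1 (Finset.mem_coe.mpr hiI) (Finset.mem_coe.mpr hyI)
              (fun h => hne h.symm)
            exact (Finset.disjoint_left.mp hdis myUself) hiUy
          rw [hyi] at hvy
          obtain ⟨q₀, hq₀, -⟩ := myReachPath (hreach i)
          exact hvi (myUL2 hq₀ (hc2 q₀ hq₀) hvy)
        · obtain ⟨p₀, hp₀, hp₀U⟩ := myReachInPath (hJ.2.1 i hiU) hiU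
          exact hvU (hp₀U v (hc1 p₀ hp₀))
      exact myML hloop hij hir hj hcut
  · -- direction ⊇
    rintro ⟨hir, pj, pc, hpj, hpc, hint⟩
    have hrpj : r ∉ pj.toFinset := by
      rw [List.mem_toFinset]
      intro h
      obtain ⟨l₁, l₂, heq⟩ := List.append_of_mem h
      have hs := myPathSuffix (heq ▸ hpj)
      cases l₂ with
      | nil =>
        have h5 := hs.2.2
        simp at h5
        exact hj h5.symm
      | cons w t =>
        exact habs (r, w) (List.isChain_cons_cons.mp hs.1.2.2).1 rfl
    have hFU : ∀ x ∈ pj.toFinset, x ∈ myCutU R r pj.toFinset := by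
      intro x hx
      exact myCutUmem.mpr (fun q hq => ⟨x, myHeadMem hq, hx⟩)
    have hUsub : myCutU R r pj.toFinset ⊆ Finset.univ.erase r := by
      intro x hx
      rw [Finset.mem_erase]
      refine ⟨?_, Finset.mem_univ x⟩
      rintro rfl
      obtain ⟨z, hz, hzF⟩ := myCutUmem.mp hx [x]
        ⟨⟨by simp, by simp, by simp⟩, by simp, by simp⟩
      simp at hz
      subst hz
      exact hrpj hzF
    have hUmono : ∀ x ∈ myCutU R r pj.toFinset, ∀ z ∈ Uset R r x,
        z ∈ myCutU R r pj.toFinset := by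
      intro x hx z hz
      refine myCutUmem.mpr (fun q hq => ?_)
      have hxq : x ∈ q := myUsetMem.mp hz q hq
      obtain ⟨q₁, q₂, heq⟩ := List.append_of_mem hxq
      obtain ⟨w, hw, hwF⟩ := myCutUmem.mp hx _ (myPathSuffix (heq ▸ hq))
      refine ⟨w, ?_, hwF⟩
      rw [heq]
      exact List.mem_append.mpr (Or.inr hw)
    have hJb : ∀ w ∈ myCutU R r pj.toFinset,
        ReachIn R (myCutU R r pj.toFinset) w j := by
      intro w hw
      obtain ⟨q, hq, -⟩ := myReachPath (hreach w)
      obtain ⟨q₁, x, q₂, heq, hxF, hnone⟩ :=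
        myFirstSplit (· ∈ pj.toFinset) q (myCutUmem.mp hw q hq)
      have hq1U : ∀ y ∈ q₁ ++ [x], y ∈ myCutU R r pj.toFinset := by
        intro y hy
        rcases List.mem_append.mp hy with hy1 | hy1
        · by_contra hyU
          rw [myCutUmem] at hyU
          push_neg at hyU
          obtain ⟨qy, hqy, hqymiss⟩ := hyU
          obtain ⟨a₁, a₂, heq2⟩ := List.append_of_mem hy1
          have hq' : q = a₁ ++ y :: (a₂ ++ x :: q₂) := by rw [heq, heq2]; simp
          have hpre := myPathPrefix (hq' ▸ hq)
          have hpreF : ∀ z ∈ a₁ ++ [y], z ∉ pj.toFinset := by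
            intro z hzm
            rcases List.mem_append.mp hzm with h5 | h5
            · exact hnone z (by rw [heq2]; exact List.mem_append.mpr (Or.inl h5))
            · simp at h5; subst h5; exact hnone z hy1
          have r1 : myRA R pj.toFinset w y := myPathRA hpre hpreF
          have r2 : myRA R pj.toFinset y r := myPathRA hqy hqymiss
          have hwF : w ∉ pj.toFinset := by
            have hq1ne : q₁ ≠ [] := by rintro rfl; simp at hy1
            have h5 := hq.2.1
            rw [heq, List.head?_append_of_ne_nil _ hq1ne] at h5
            exact hnone w (myHeadMemOf h5)
          obtain ⟨p', hp', hp'F⟩ := myRAPath (r1.trans r2) hwF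
          obtain ⟨z, hz1, hz2⟩ := myCutUmem.mp hw p' hp'
          exact hp'F z hz1 hz2
        · simp at hy1; rw [hy1]; exact hFU x hxF
      have hRin1 : ReachIn R (myCutU R r pj.toFinset) w x :=
        myPathReachIn (myPathPrefix (heq ▸ hq)) hq1U
      have hxpj : x ∈ pj := List.mem_toFinset.mp hxF
      obtain ⟨l₁, l₂, heq3⟩ := List.append_of_mem hxpj
      have hsfx := myPathSuffix (heq3 ▸ hpj)
      have hsfxU : ∀ z ∈ x :: l₂, z ∈ myCutU R r pj.toFinset := by
        intro z hz
        refine hFU z (List.mem_toFinset.mpr ?_)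
        rw [heq3]
        exact List.mem_append.mpr (Or.inr hz)
      exact hRin1.trans (myPathReachIn hsfx hsfxU)
    have hJc : ∀ w ∈ Finset.univ.erase r \ myCutU R r pj.toFinset,
        ReachIn R (Finset.univ \ myCutU R r pj.toFinset) w r := by
      intro w hw
      rw [Finset.mem_sdiff] at hw
      have hwU := hw.2
      rw [myCutUmem] at hwU
      push_neg at hwU
      obtain ⟨q, hq, hqF⟩ := hwU
      have hqU : ∀ z ∈ q, z ∉ myCutU R r pj.toFinset := by
        intro z hz hzU
        obtain ⟨q₁, q₂, heq⟩ := List.append_of_mem hz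
        obtain ⟨w', hw', hw'F⟩ := myCutUmem.mp hzU _ (myPathSuffix (heq ▸ hq))
        refine hqF w' ?_ hw'F
        rw [heq]
        exact List.mem_append.mpr (Or.inr hw')
      exact myPathReachIn hq
        (fun z hz => Finset.mem_sdiff.mpr ⟨Finset.mem_univ z, hqU z hz⟩)
    have hIU : myMaxI R r (myCutU R r pj.toFinset) ⊆ myCutU R r pj.toFinset :=
      fun x hx => (myMaxImem.mp hx).1
    have hPD : (↑(myMaxI R r (myCutU R r pj.toFinset)) : Set (Fin c)).PairwiseDisjoint
        (fun i => Uset R r i) := by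
      intro x hx y hy hxy
      have hxm := myMaxImem.mp (Finset.mem_coe.mp hx)
      have hym := myMaxImem.mp (Finset.mem_coe.mp hy)
      rw [Function.onFun]
      rw [Finset.disjoint_left]
      intro z hzx hzy
      rcases myLam hreach hzx hzy hxy with h | h
      · exact hxy (hxm.2 y hym.1 h)
      · exact hxy (hym.2 x hxm.1 h).symm
    have hUnion : myCutU R r pj.toFinset =
        (myMaxI R r (myCutU R r pj.toFinset)).biUnion (Uset R r) := by
      apply Finset.Subset.antisymm
      · intro w hw
        have hwT : w ∈ (myCutU R r pj.toFinset).filter (fun y => w ∈ Uset R r y) :=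
          Finset.mem_filter.mpr ⟨hw, myUself⟩
        obtain ⟨x, hxT, hxmin⟩ := Finset.exists_min_image
          ((myCutU R r pj.toFinset).filter (fun y => w ∈ Uset R r y))
          (fun x => (((myCutU R r pj.toFinset).filter (fun y => w ∈ Uset R r y)).filter
            (fun y => x ∈ Uset R r y)).card) ⟨w, hwT⟩
        have hxU : x ∈ myCutU R r pj.toFinset := (Finset.mem_filter.mp hxT).1
        have hwUx : w ∈ Uset R r x := (Finset.mem_filter.mp hxT).2
        have hxI : x ∈ myMaxI R r (myCutU R r pj.toFinset) := by
          refine myMaxImem.mpr ⟨hxU, ?_⟩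
          intro y hyU hxUy
          by_contra hne
          have hyT : y ∈ (myCutU R r pj.toFinset).filter (fun y => w ∈ Uset R r y) :=
            Finset.mem_filter.mpr ⟨hyU, myUtrans hwUx hxUy⟩
          have hsub : ((myCutU R r pj.toFinset).filter (fun y => w ∈ Uset R r y)).filter
              (fun z => y ∈ Uset R r z) ⊆
              ((myCutU R r pj.toFinset).filter (fun y => w ∈ Uset R r y)).filter
              (fun z => x ∈ Uset R r z) := by
            intro z hz
            rw [Finset.mem_filter] at hz ⊢
            exact ⟨hz.1, myUtrans hxUy hz.2⟩
          have hxnot : x ∉ ((myCutU R r pj.toFinset).filter (fun y => w ∈ Uset R r y)).filter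
              (fun z => y ∈ Uset R r z) := by
            intro hmem
            exact hne (myUantisymm hreach hxUy (Finset.mem_filter.mp hmem).2)
          have hxin : x ∈ ((myCutU R r pj.toFinset).filter (fun y => w ∈ Uset R r y)).filter
              (fun z => x ∈ Uset R r z) :=
            Finset.mem_filter.mpr ⟨hxT, myUself⟩
          have hss := Finset.card_lt_card ⟨hsub, fun hsub' => hxnot (hsub' hxin)⟩
          have hmin := hxmin y hyT
          omega
        exact Finset.mem_biUnion.mpr ⟨x, hxI, hwUx⟩
      · intro w hw
        obtain ⟨x, hxI, hwx⟩ := Finset.mem_biUnion.mp hw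
        exact hUmono x (myMaxImem.mp hxI).1 w hwx
    have hiI : i ∈ myMaxI R r (myCutU R r pj.toFinset) := by
      refine myMaxImem.mpr ⟨hFU i (List.mem_toFinset.mpr (myHeadMem hpj)), ?_⟩
      intro y hyU hiUy
      by_contra hne
      have hypc : y ∈ pc := myUsetMem.mp hiUy pc hpc
      obtain ⟨c₁, c₂, heq⟩ := List.append_of_mem hypc
      have hsuf := myPathSuffix (heq ▸ hpc)
      obtain ⟨z, hz, hzF⟩ := myCutUmem.mp hyU _ hsuf
      have hzpc : z ∈ pc := by
        rw [heq]; exact List.mem_append.mpr (Or.inr hz)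
      have hzi : z = i := by
        have h5 : z ∈ pj.toFinset ∩ pc.toFinset :=
          Finset.mem_inter.mpr ⟨hzF, List.mem_toFinset.mpr hzpc⟩
        rw [hint] at h5
        simpa using h5
      rw [hzi] at hz
      have hic : i ∈ c₂ := by
        rcases List.mem_cons.mp hz with h5 | h5
        · exact absurd h5 hne
        · exact h5
      have hc₁ne : c₁ ≠ [] := by
        rintro rfl
        have h5 := hpc.2.1
        rw [heq] at h5
        simp at h5
        exact hne h5.symm
      have hic1 : i ∈ c₁ := by
        have h5 := hpc.2.1
        rw [heq, List.head?_append_of_ne_nil _ hc₁ne] at h5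
        exact myHeadMemOf h5
      have hnod := hpc.1.2.1
      rw [heq, List.nodup_append'] at hnod
      exact hnod.2.2 hic1 (by simp [hic])
    exact ⟨myCutU R r pj.toFinset, myMaxI R r (myCutU R r pj.toFinset),
      ⟨hUsub, hJb, hJc⟩, ⟨fun x hx => hUsub (hIU hx), hPD, hUnion⟩, hiI⟩
end
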